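/- arXiv:2303.14902 — 4 statements merged into one kernel-verified Lean document; each statement's English description precedes it below -/
import Mathlib

section
/- Let (V, b) be a symplectic vector space of dimension 2ℓ (ℓ ≥ 1) over an algebraically closed field K of characteristic 2, and let e ∈ sp(V) be nilpotent such that V = W ⊕ Z where W and Z are totally singular e-invariant subspaces on each of which e acts with a single Jordan block of size ℓ. Let ẽ be the map induced by e on S²(V), let φ : S²(V) → K be determined by φ(xy) = b(x, y), and set α = ν₂(ℓ). Then ker(ẽ^{2^α − 1}) ⊆ ker φ, and ker(ẽ^{2^α}) ⊄ ker φ. -/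
open scoped TensorProduct

/-- The symmetric square `S²(V)`: the quotient of `V ⊗ V` by the span of all
`x ⊗ y - y ⊗ x`. -/
noncomputable abbrev SymSq (K V : Type*) [Field K] [AddCommGroup V] [Module K V] : Type _ :=
  TensorProduct K V V ⧸
    Submodule.span K {z : TensorProduct K V V | ∃ x y : V, z = x ⊗ₜ[K] y - y ⊗ₜ[K] x}

/-- The product `xy` in the symmetric square, i.e. the image of `x ⊗ y`. -/
noncomputable def SymSq.mul {K V : Type*} [Field K] [AddCommGroup V] [Module K V]
    (x y : V) : SymSq K V :=
  Submodule.Quotient.mk (x ⊗ₜ[K] y)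

section aux
variable {K V : Type*} [Field K] [AddCommGroup V] [Module K V]

/-- Linear independence of a Krylov sequence. -/
lemma krylov_li (f : Module.End K V) (x : V) (n : ℕ)
    (h0 : (f ^ n) x = 0) (h1 : (f ^ (n - 1)) x ≠ 0) :
    LinearIndependent K (fun i : Fin n => (f ^ (i : ℕ)) x) := by
  have hn : 1 ≤ n := by
    by_contra h
    interval_cases n <;> simp_all
  have hbig : ∀ s : ℕ, n ≤ s → (f ^ s) x = 0 := by
    intro s hs
    have : f ^ s = f ^ (s - n) * f ^ n := by
      rw [← pow_add]; congr 1; omega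
    rw [this, Module.End.mul_apply, h0, map_zero]
  rw [Fintype.linearIndependent_iff]
  intro g hg
  by_contra hne
  push_neg at hne
  obtain ⟨i0, hi0⟩ := hne
  have hP : ∃ k : ℕ, ∃ h : k < n, g ⟨k, h⟩ ≠ 0 := ⟨i0, i0.2, hi0⟩
  classical
  let k0 := Nat.find hP
  obtain ⟨hk0n, hk0⟩ := Nat.find_spec hP
  have hmin : ∀ j, j < k0 → ∀ h : j < n, g ⟨j, h⟩ = 0 := by
    intro j hj h
    by_contra hc
    have hle : Nat.find hP ≤ j := Nat.find_le ⟨h, hc⟩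
    omega
  have happ := congrArg (f ^ (n - 1 - k0)) hg
  rw [map_zero, map_sum] at happ
  have hsingle : ∀ i : Fin n, i ≠ ⟨k0, hk0n⟩ →
      (f ^ (n - 1 - k0)) (g i • (f ^ (i : ℕ)) x) = 0 := by
    intro i hi
    rw [map_smul]
    rcases lt_or_gt_of_ne (fun h : (i : ℕ) = k0 => hi (Fin.ext h)) with h | h
    · rw [hmin i h i.2]; simp
    · rw [← Module.End.mul_apply, ← pow_add, hbig _ (by omega), smul_zero]
  rw [Finset.sum_eq_single (⟨k0, hk0n⟩ : Fin n) (fun i _ hi => hsingle i hi)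
    (by intro h; exact absurd (Finset.mem_univ _) h)] at happ
  rw [map_smul, ← Module.End.mul_apply, ← pow_add] at happ
  have : n - 1 - k0 + k0 = n - 1 := by omega
  rw [this] at happ
  exact hk0 ((smul_eq_zero.mp happ).resolve_right h1)

/-- All binomial coefficients `C(2^a - 1, k)` are odd. -/
lemma choose_two_pow_sub_one_odd (a : ℕ) : ∀ k ≤ 2 ^ a - 1, (2 ^ a - 1).choose k % 2 = 1 := by
  induction a with
  | zero =>
    intro k hk
    norm_num at hk
    have : k = 0 := by omega
    subst this; simp
  | succ a ih =>
    intro k hk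
    haveI : Fact (Nat.Prime 2) := ⟨Nat.prime_two⟩
    have hp1 : 1 ≤ 2 ^ a := Nat.one_le_two_pow
    have h := @Choose.choose_modEq_choose_mod_mul_choose_div_nat (2 ^ (a + 1) - 1) k 2 _
    have h2 : (2 ^ (a + 1) - 1) % 2 = 1 := by
      have : 2 ^ (a + 1) = 2 * 2 ^ a := by ring
      omega
    have h3 : (2 ^ (a + 1) - 1) / 2 = 2 ^ a - 1 := by
      have : 2 ^ (a + 1) = 2 * 2 ^ a := by ring
      omega
    have h4 : k % 2 ≤ 1 := by omega
    have h5 : Nat.choose 1 (k % 2) = 1 := by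
      rcases Nat.le_one_iff_eq_zero_or_eq_one.mp h4 with h' | h' <;> simp [h']
    rw [Nat.ModEq] at h
    rw [h, h2, h3, h5, one_mul]
    apply ih
    have : 2 ^ (a + 1) = 2 * 2 ^ a := by ring
    omega

end aux

section chain
variable {K V : Type*} [Field K] [AddCommGroup V] [Module K V]

/-- A Jordan chain: `chain e ℓ x i = e^(ℓ-i) x` for `1 ≤ i ≤ ℓ`, `0` otherwise. -/
noncomputable def chain (e : Module.End K V) (ℓ : ℕ) (x : V) (i : ℕ) : V :=
  if 1 ≤ i ∧ i ≤ ℓ then (e ^ (ℓ - i)) x else 0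

lemma chain_zero (e : Module.End K V) (ℓ : ℕ) (x : V) : chain e ℓ x 0 = 0 := by
  simp [chain]

lemma chain_last (e : Module.End K V) (ℓ : ℕ) (x : V) (hl : 1 ≤ ℓ) :
    chain e ℓ x ℓ = x := by
  simp [chain, hl]

lemma chain_one (e : Module.End K V) (ℓ : ℕ) (x : V) (hl : 1 ≤ ℓ) :
    chain e ℓ x 1 = (e ^ (ℓ - 1)) x := by
  simp [chain, hl]

lemma chain_step (e : Module.End K V) (ℓ : ℕ) (x : V) (hx : (e ^ ℓ) x = 0) :
    ∀ i ≤ ℓ, e (chain e ℓ x i) = chain e ℓ x (i - 1) := by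
  intro i hi
  rcases Nat.eq_zero_or_pos i with rfl | h1
  · simp [chain]
  have he : e (chain e ℓ x i) = (e ^ (ℓ - i + 1)) x := by
    simp only [chain, if_pos (⟨h1, hi⟩ : 1 ≤ i ∧ i ≤ ℓ)]
    rw [pow_succ', Module.End.mul_apply]
  rcases Nat.lt_or_ge 1 i with h2 | h2
  · rw [he]
    simp only [chain, if_pos (show 1 ≤ i - 1 ∧ i - 1 ≤ ℓ by omega)]
    have h3 : ℓ - i + 1 = ℓ - (i - 1) := by omega
    rw [h3]
  · have : i = 1 := by omega
    subst this
    rw [he, (by omega : ℓ - 1 + 1 = ℓ), hx]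
    simp [chain]

lemma chain_pow (e : Module.End K V) (ℓ : ℕ) (x : V) (hx : (e ^ ℓ) x = 0) :
    ∀ (k : ℕ), ∀ i ≤ ℓ, (e ^ k) (chain e ℓ x i) = chain e ℓ x (i - k) := by
  intro k
  induction k with
  | zero => intro i hi; simp
  | succ k ih =>
    intro i hi
    rw [pow_succ, Module.End.mul_apply, chain_step e ℓ x hx i hi, ih (i - 1) (by omega)]
    congr 1
    omega

lemma chain_mem (e : Module.End K V) (ℓ : ℕ) (x : V) (S : Submodule K V)
    (hinv : ∀ v ∈ S, e v ∈ S) (hxS : x ∈ S) : ∀ i, chain e ℓ x i ∈ S := by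
  have hp : ∀ k, (e ^ k) x ∈ S := by
    intro k
    induction k with
    | zero => simpa using hxS
    | succ k ih => rw [pow_succ', Module.End.mul_apply]; exact hinv _ ih
  intro i
  unfold chain
  split
  · exact hp _
  · exact S.zero_mem

lemma chain_li (e : Module.End K V) (ℓ : ℕ) (x : V) (hl : 1 ≤ ℓ)
    (hx : (e ^ ℓ) x = 0) (hx1 : (e ^ (ℓ - 1)) x ≠ 0) :
    LinearIndependent K (fun a : Fin ℓ => chain e ℓ x ((a : ℕ) + 1)) := by
  have hk := krylov_li e x ℓ hx hx1
  have hσ : Function.Injective (fun a : Fin ℓ => (⟨ℓ - 1 - (a : ℕ), by omega⟩ : Fin ℓ)) := by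
    intro a b hab
    have h := congrArg Fin.val hab
    simp only at h
    have ha := a.2; have hb := b.2
    exact Fin.ext (by omega)
  have h2 := hk.comp _ hσ
  convert h2 using 1
  funext a
  simp only [Function.comp]
  rw [chain, if_pos (show 1 ≤ (a : ℕ) + 1 ∧ (a : ℕ) + 1 ≤ ℓ by omega)]
  have h3 : ℓ - ((a : ℕ) + 1) = ℓ - 1 - (a : ℕ) := by omega
  rw [h3]

end chain

set_option maxHeartbeats 3200000

/-- Lemma: for nilpotent `e ∈ sp(V)` with `V ↓ K[e] = W(ℓ)` (i.e. `V = W ⊕ Z` with `W`, `Z`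
totally singular `e`-invariant, `e` a single Jordan block of size `ℓ` on each), with
`α = ν₂(ℓ)`: `ker(ẽ^(2^α - 1)) ⊆ ker φ` and `ker(ẽ^(2^α)) ⊄ ker φ`. -/
theorem stmt13 (K : Type*) [Field K] [IsAlgClosed K] [CharP K 2]
    (V : Type*) [AddCommGroup V] [Module K V] [FiniteDimensional K V]
    (ℓ : ℕ) (hl : 1 ≤ ℓ) (hdim : Module.finrank K V = 2 * ℓ)
    (b : V →ₗ[K] V →ₗ[K] K)
    (halt : ∀ v : V, b v v = 0)
    (hnd : ∀ v : V, (∀ w : V, b v w = 0) → v = 0)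
    (e : Module.End K V)
    (hsp : ∀ v w : V, b (e v) w + b v (e w) = 0)
    (hnil : IsNilpotent e)
    (W Z : Submodule K V) (hcompl : IsCompl W Z)
    (hWsing : ∀ x ∈ W, ∀ y ∈ W, b x y = 0)
    (hZsing : ∀ x ∈ Z, ∀ y ∈ Z, b x y = 0)
    (hWinv : ∀ x ∈ W, e x ∈ W) (hZinv : ∀ x ∈ Z, e x ∈ Z)
    (hWdim : Module.finrank K ↥W = ℓ) (hZdim : Module.finrank K ↥Z = ℓ)
    (hW1 : ∃ x ∈ W, (e ^ (ℓ - 1)) x ≠ 0)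
    (hW2 : ∀ x ∈ W, (e ^ ℓ) x = 0)
    (hZ1 : ∃ x ∈ Z, (e ^ (ℓ - 1)) x ≠ 0)
    (hZ2 : ∀ x ∈ Z, (e ^ ℓ) x = 0)
    (et : Module.End K (SymSq K V))
    (het : ∀ x y : V, et (SymSq.mul x y) = SymSq.mul (e x) y + SymSq.mul x (e y))
    (φ : SymSq K V →ₗ[K] K)
    (hφ : ∀ x y : V, φ (SymSq.mul x y) = b x y) :
    LinearMap.ker (et ^ (2 ^ padicValNat 2 ℓ - 1)) ≤ LinearMap.ker φ ∧
      ¬ LinearMap.ker (et ^ (2 ^ padicValNat 2 ℓ)) ≤ LinearMap.ker φ := by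
  classical
  -- characteristic two facts
  have h2K : (2 : K) = 0 := by
    have h := CharP.cast_eq_zero K 2
    exact_mod_cast h
  have negK : ∀ a : K, -a = a := by
    intro a
    have h : a + a = 0 := by
      rw [← two_smul K a, h2K, zero_smul]
    exact neg_eq_of_add_eq_zero_left h
  have negS : ∀ v : SymSq K V, -v = v := by
    intro v
    have h : v + v = 0 := by
      rw [← two_smul K v, h2K, zero_smul]
    exact neg_eq_of_add_eq_zero_left h
  -- symmetry and adjointness of b
  have hbsymm : ∀ x y : V, b x y = b y x := by
    intro x y
    have h := halt (x + y)
    simp only [map_add, LinearMap.add_apply, halt x, halt y] at h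
    have h3 : b x y + b y x = 0 := by linear_combination h
    have h2 : b x y = -(b y x) := eq_neg_of_add_eq_zero_left h3
    rw [h2, negK]
  have hbadj : ∀ x y : V, b (e x) y = b x (e y) := by
    intro x y
    have h := hsp x y
    have h2 : b (e x) y = -(b x (e y)) := eq_neg_of_add_eq_zero_left h
    rw [h2, negK]
  have hbadjpow : ∀ (k : ℕ) (x y : V), b ((e ^ k) x) y = b x ((e ^ k) y) := by
    intro k
    induction k with
    | zero => intro x y; simp
    | succ k ih =>
      intro x y
      calc b ((e ^ (k + 1)) x) y = b ((e ^ k) (e x)) y := by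
            rw [pow_succ, Module.End.mul_apply]
        _ = b (e x) ((e ^ k) y) := ih _ _
        _ = b x (e ((e ^ k) y)) := hbadj _ _
        _ = b x ((e ^ (k + 1)) y) := by rw [pow_succ', Module.End.mul_apply]
  -- the Jordan chains
  obtain ⟨x₀, hx₀W, hx₀1⟩ := hW1
  obtain ⟨y₀, hy₀Z, hy₀1⟩ := hZ1
  have hx₀0 : (e ^ ℓ) x₀ = 0 := hW2 x₀ hx₀W
  have hy₀0 : (e ^ ℓ) y₀ = 0 := hZ2 y₀ hy₀Z
  set w : ℕ → V := chain e ℓ x₀ with hw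
  set z : ℕ → V := chain e ℓ y₀ with hz
  have hwW : ∀ i, w i ∈ W := chain_mem e ℓ x₀ W hWinv hx₀W
  have hzZ : ∀ i, z i ∈ Z := chain_mem e ℓ y₀ Z hZinv hy₀Z
  have hwpow : ∀ (k : ℕ), ∀ i ≤ ℓ, (e ^ k) (w i) = w (i - k) := chain_pow e ℓ x₀ hx₀0
  have hzpow : ∀ (k : ℕ), ∀ i ≤ ℓ, (e ^ k) (z i) = z (i - k) := chain_pow e ℓ y₀ hy₀0
  have hw0 : w 0 = 0 := chain_zero e ℓ x₀
  have hz0 : z 0 = 0 := chain_zero e ℓ y₀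
  have hwgt : ∀ i, ℓ < i → w i = 0 := by
    intro i hi; rw [hw]; unfold chain; rw [if_neg (by omega)]
  have hzgt : ∀ i, ℓ < i → z i = 0 := by
    intro i hi; rw [hz]; unfold chain; rw [if_neg (by omega)]
  -- the coefficients of the form
  set cc : ℕ → K := fun s => b (w (s - ℓ)) (z ℓ) with hcc
  have hccv : ∀ s ≤ ℓ, cc s = 0 := by
    intro s hs
    have : s - ℓ = 0 := by omega
    rw [hcc]; simp only [this, hw0]
    simp
  have hbwz : ∀ i j, 1 ≤ i → i ≤ ℓ → 1 ≤ j → j ≤ ℓ → b (w i) (z j) = cc (i + j) := by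
    intro i j h1 h2 h3 h4
    have hzj : z j = (e ^ (ℓ - j)) (z ℓ) := by
      rw [hzpow (ℓ - j) ℓ le_rfl]
      congr 1
      omega
    rw [hzj, ← hbadjpow, hwpow (ℓ - j) i h2]
    rw [hcc]
    have : i - (ℓ - j) = i + j - ℓ := by omega
    rw [this]
  -- the basis of V
  have hliW := chain_li e ℓ x₀ hl hx₀0 hx₀1
  have hliZ := chain_li e ℓ y₀ hl hy₀0 hy₀1
  have hWspan : Submodule.span K (Set.range (fun a : Fin ℓ => w ((a : ℕ) + 1))) = W := by
    apply Submodule.eq_of_le_of_finrank_le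
    · rw [Submodule.span_le]
      rintro v ⟨a, rfl⟩
      exact hwW _
    · rw [hWdim, finrank_span_eq_card hliW, Fintype.card_fin]
  have hZspan : Submodule.span K (Set.range (fun c : Fin ℓ => z ((c : ℕ) + 1))) = Z := by
    apply Submodule.eq_of_le_of_finrank_le
    · rw [Submodule.span_le]
      rintro v ⟨c, rfl⟩
      exact hzZ _
    · rw [hZdim, finrank_span_eq_card hliZ, Fintype.card_fin]
  set vfam : Fin ℓ ⊕ Fin ℓ → V :=
    Sum.elim (fun a : Fin ℓ => w ((a : ℕ) + 1)) (fun c : Fin ℓ => z ((c : ℕ) + 1)) with hvfam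
  have hliV : LinearIndependent K vfam := by
    apply hliW.sum_type hliZ
    rw [hWspan, hZspan]
    exact hcompl.disjoint
  have hspanV : Submodule.span K (Set.range vfam) = ⊤ := by
    rw [hvfam, Set.Sum.elim_range, Submodule.span_union, hWspan, hZspan]
    exact hcompl.sup_eq_top
  set bV : Module.Basis (Fin ℓ ⊕ Fin ℓ) K V := Module.Basis.mk hliV (by rw [hspanV]) with hbV
  have hbVl : ∀ a : Fin ℓ, bV (Sum.inl a) = w ((a : ℕ) + 1) := by
    intro a; rw [hbV, Module.Basis.mk_apply]; rfl
  have hbVr : ∀ c : Fin ℓ, bV (Sum.inr c) = z ((c : ℕ) + 1) := by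
    intro c; rw [hbV, Module.Basis.mk_apply]; rfl
  -- basic algebra of SymSq.mul
  have hmul0l : ∀ y : V, SymSq.mul (K := K) (0 : V) y = 0 := by
    intro y
    show Submodule.Quotient.mk ((0 : V) ⊗ₜ[K] y) = 0
    rw [TensorProduct.zero_tmul]
    exact Submodule.Quotient.mk_zero _
  have hmul0r : ∀ x : V, SymSq.mul (K := K) x (0 : V) = 0 := by
    intro x
    show Submodule.Quotient.mk (x ⊗ₜ[K] (0 : V)) = 0
    rw [TensorProduct.tmul_zero]
    exact Submodule.Quotient.mk_zero _
  have hmulcomm : ∀ x y : V, SymSq.mul (K := K) x y = SymSq.mul y x := by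
    intro x y
    show Submodule.Quotient.mk (x ⊗ₜ[K] y) = Submodule.Quotient.mk (y ⊗ₜ[K] x)
    rw [Submodule.Quotient.eq]
    exact Submodule.subset_span ⟨x, y, rfl⟩
  -- scalar casts
  have hnsmulK : ∀ (n : ℕ) (u : SymSq K V), n • u = ((n : K)) • u :=
    fun n u => (Nat.cast_smul_eq_nsmul K n u).symm
  have hcast0 : ∀ n : ℕ, 2 ∣ n → ((n : K)) = 0 :=
    fun n h => (CharP.cast_eq_zero_iff K 2 n).mpr h
  have hcast1 : ∀ n : ℕ, n % 2 = 1 → ((n : K)) = 1 := by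
    intro n h
    obtain ⟨c, hc⟩ : ∃ c, n = 2 * c + 1 := ⟨n / 2, by omega⟩
    subst hc
    push_cast
    rw [h2K]
    ring
  -- the lift of et to the tensor square
  set ET : Module.End K (TensorProduct K V V) :=
    LinearMap.rTensor V e + LinearMap.lTensor V e with hET
  have hETt : ∀ x y : V, ET (x ⊗ₜ[K] y) = e x ⊗ₜ[K] y + x ⊗ₜ[K] e y := by
    intro x y
    rw [hET]
    simp
  have hcomm : Commute (LinearMap.rTensor V e) (LinearMap.lTensor V e) := by
    unfold Commute SemiconjBy
    apply TensorProduct.ext'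
    intro x y
    simp [Module.End.mul_apply]
  have hrpow : ∀ (k : ℕ) (x y : V),
      ((LinearMap.rTensor V e) ^ k) (x ⊗ₜ[K] y) = ((e ^ k) x) ⊗ₜ[K] y := by
    intro k
    induction k with
    | zero => intro x y; simp
    | succ k ih =>
      intro x y
      have h1 : (LinearMap.rTensor V e) ^ (k + 1)
          = LinearMap.rTensor V e * (LinearMap.rTensor V e) ^ k := pow_succ' _ _
      rw [h1, Module.End.mul_apply, ih, LinearMap.rTensor_tmul, pow_succ' e k,
        Module.End.mul_apply]
  have hlpow : ∀ (k : ℕ) (x y : V),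
      ((LinearMap.lTensor V e) ^ k) (x ⊗ₜ[K] y) = x ⊗ₜ[K] ((e ^ k) y) := by
    intro k
    induction k with
    | zero => intro x y; simp
    | succ k ih =>
      intro x y
      have h1 : (LinearMap.lTensor V e) ^ (k + 1)
          = LinearMap.lTensor V e * (LinearMap.lTensor V e) ^ k := pow_succ' _ _
      rw [h1, Module.End.mul_apply, ih, LinearMap.lTensor_tmul, pow_succ' e k,
        Module.End.mul_apply]
  have hETn : ∀ (n : ℕ) (x y : V), (ET ^ n) (x ⊗ₜ[K] y)
      = ∑ k ∈ Finset.range (n + 1), (n.choose k) • (((e ^ k) x) ⊗ₜ[K] ((e ^ (n - k)) y)) := by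
    intro n x y
    rw [hET, hcomm.add_pow, LinearMap.sum_apply]
    apply Finset.sum_congr rfl
    intro k hk
    simp only [Module.End.mul_apply, Module.End.natCast_apply, map_nsmul]
    rw [hlpow, hrpow]
  have hqet : ∀ t : TensorProduct K V V,
      et (Submodule.Quotient.mk t) = Submodule.Quotient.mk (ET t) := by
    have h : et ∘ₗ (Submodule.mkQ _) = (Submodule.mkQ _) ∘ₗ ET := by
      apply TensorProduct.ext'
      intro x y
      simp only [LinearMap.comp_apply, Submodule.mkQ_apply]
      show et (SymSq.mul x y) = Submodule.Quotient.mk (ET (x ⊗ₜ[K] y))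
      rw [het, hETt, Submodule.Quotient.mk_add]
      rfl
    intro t
    exact LinearMap.congr_fun h t
  have hqetn : ∀ (n : ℕ) (t : TensorProduct K V V),
      (et ^ n) (Submodule.Quotient.mk t) = Submodule.Quotient.mk ((ET ^ n) t) := by
    intro n
    induction n with
    | zero => intro t; simp
    | succ n ih =>
      intro t
      have h1 : et ^ (n + 1) = et * et ^ n := pow_succ' _ _
      have h2 : ET ^ (n + 1) = ET * ET ^ n := pow_succ' _ _
      rw [h1, h2, Module.End.mul_apply, ih, hqet, Module.End.mul_apply]
  have L1 : ∀ (n : ℕ) (x y : V), (et ^ n) (SymSq.mul x y)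
      = ∑ k ∈ Finset.range (n + 1), (n.choose k) • SymSq.mul ((e ^ k) x) ((e ^ (n - k)) y) := by
    intro n x y
    show (et ^ n) (Submodule.Quotient.mk (x ⊗ₜ[K] y)) = _
    rw [hqetn, hETn, ← Submodule.mkQ_apply, map_sum]
    apply Finset.sum_congr rfl
    intro k hk
    rw [map_nsmul]
    rfl
  have L2 : ∀ (a : ℕ) (x y : V), (et ^ (2 ^ a)) (SymSq.mul x y)
      = SymSq.mul ((e ^ (2 ^ a)) x) y + SymSq.mul x ((e ^ (2 ^ a)) y) := by
    intro a x y
    rw [L1]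
    have hpos : 0 < 2 ^ a := pow_pos (by norm_num) a
    have hsub : ({0, 2 ^ a} : Finset ℕ) ⊆ Finset.range (2 ^ a + 1) := by
      intro k hk
      simp only [Finset.mem_insert, Finset.mem_singleton] at hk
      rcases hk with rfl | rfl <;> simp [Nat.lt_succ_iff]
    rw [← Finset.sum_subset hsub]
    · rw [Finset.sum_pair hpos.ne]
      simp only [Nat.choose_zero_right, Nat.choose_self, one_smul, pow_zero, Nat.sub_zero,
        Nat.sub_self, Module.End.one_apply]
      rw [add_comm]
    · intro k hk hk2
      simp only [Finset.mem_insert, Finset.mem_singleton, not_or] at hk2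
      have hdvd : 2 ∣ (2 ^ a).choose k := Nat.Prime.dvd_choose_pow Nat.prime_two hk2.1 hk2.2
      rw [hnsmulK, hcast0 _ hdvd, zero_smul]
  -- arithmetic of q and m
  set q : ℕ := 2 ^ padicValNat 2 ℓ with hqdef
  have hq1 : 1 ≤ q := Nat.one_le_two_pow
  have hqd : q ∣ ℓ := pow_padicValNat_dvd
  set m : ℕ := ℓ / q with hmdef
  have hlm : ℓ = q * m := (Nat.mul_div_cancel' hqd).symm
  have hm1 : 1 ≤ m := by
    rcases Nat.eq_zero_or_pos m with h | h
    · exfalso; rw [h, Nat.mul_zero] at hlm; omega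
    · exact h
  have hmodd : m % 2 = 1 := by
    by_contra hc
    obtain ⟨m', hm'⟩ : ∃ m', m = 2 * m' := ⟨m / 2, by omega⟩
    have hdvd : 2 ^ (padicValNat 2 ℓ + 1) ∣ ℓ := by
      refine ⟨m', ?_⟩
      conv_lhs => rw [hlm]
      rw [hm', hqdef, pow_succ]
      ring
    have hℓ0 : ℓ ≠ 0 := by omega
    rw [Nat.Prime.pow_dvd_iff_le_factorization Nat.prime_two hℓ0,
      Nat.factorization_def ℓ Nat.prime_two] at hdvd
    omega
  have hstepq : ∀ s : ℕ, q ∣ s → s < ℓ → s + q ≤ ℓ := by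
    intro s hd hs
    obtain ⟨u', hu'⟩ := hd
    have hum : u' < m := by
      by_contra hc
      push_neg at hc
      have : q * m ≤ q * u' := Nat.mul_le_mul_left q hc
      omega
    have : q * (u' + 1) ≤ q * m := Nat.mul_le_mul_left q hum
    rw [Nat.mul_succ] at this
    omega
  -- nondegeneracy: cc (ℓ + 1) ≠ 0
  have hcc1ne : cc (ℓ + 1) ≠ 0 := by
    intro hcontra
    have h17 : ℓ + 1 - ℓ = 1 := by omega
    have hcc1eq : cc (ℓ + 1) = b (w 1) (z ℓ) := by
      show b (w (ℓ + 1 - ℓ)) (z ℓ) = b (w 1) (z ℓ)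
      rw [h17]
    have hzero : b (w 1) = 0 := by
      apply bV.ext
      intro i
      cases i with
      | inl a =>
        rw [hbVl, LinearMap.zero_apply]
        exact hWsing _ (hwW 1) _ (hwW _)
      | inr c =>
        rw [hbVr, LinearMap.zero_apply]
        rw [hbwz 1 ((c : ℕ) + 1) le_rfl hl (by omega) (by omega)]
        rcases Nat.lt_or_ge ((c : ℕ) + 1) ℓ with hlt | hge
        · exact hccv _ (by omega)
        · have h18 : 1 + ((c : ℕ) + 1) = ℓ + 1 := by have := c.2; omega
          rw [h18]
          exact hcontra
    have hw1 : w 1 = 0 := hnd _ (fun v => by rw [hzero]; rfl)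
    rw [hw, chain_one e ℓ x₀ hl] at hw1
    exact hx₀1 hw1
  -- index bounds
  have hidx1 : ∀ s, s < m → 1 + s * q ≤ ℓ ∧ q ≤ ℓ - s * q := by
    intro s hs
    have h1 : (s + 1) * q ≤ m * q := Nat.mul_le_mul_right q hs
    rw [Nat.succ_mul] at h1
    have h2 : m * q = ℓ := by rw [hlm]; ring
    constructor <;> omega
  -- part 2 witness
  have L2q : ∀ x y : V, (et ^ q) (SymSq.mul x y)
      = SymSq.mul ((e ^ q) x) y + SymSq.mul x ((e ^ q) y) := by
    intro x y
    rw [hqdef]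
    exact L2 _ x y
  set F : ℕ → SymSq K V := fun s => SymSq.mul (w (1 + s * q - q)) (z (ℓ - s * q)) with hF
  set u : SymSq K V := ∑ s ∈ Finset.range m, SymSq.mul (w (1 + s * q)) (z (ℓ - s * q)) with hu
  have hterm : ∀ s, s < m →
      (et ^ q) (SymSq.mul (w (1 + s * q)) (z (ℓ - s * q))) = F s + F (s + 1) := by
    intro s hs
    obtain ⟨hi1, hi2⟩ := hidx1 s hs
    rw [L2q, hwpow q (1 + s * q) hi1, hzpow q (ℓ - s * q) (by omega)]
    have e1 : 1 + (s + 1) * q - q = 1 + s * q := by rw [Nat.succ_mul]; omega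
    have e2 : ℓ - (s + 1) * q = ℓ - s * q - q := by rw [Nat.succ_mul]; omega
    show _ = SymSq.mul (w (1 + s * q - q)) (z (ℓ - s * q))
        + SymSq.mul (w (1 + (s + 1) * q - q)) (z (ℓ - (s + 1) * q))
    rw [e1, e2]
  have hker : (et ^ q) u = 0 := by
    rw [hu, map_sum]
    rw [Finset.sum_congr rfl (fun s hs => hterm s (Finset.mem_range.mp hs))]
    have hsplit : ∀ s : ℕ, F s + F (s + 1) = F s - F (s + 1) := by
      intro s
      rw [sub_eq_add_neg, negS]
    rw [Finset.sum_congr rfl (fun s _ => hsplit s), Finset.sum_range_sub']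
    have hF0 : F 0 = 0 := by
      show SymSq.mul (w (1 + 0 * q - q)) (z (ℓ - 0 * q)) = 0
      have e3 : 1 + 0 * q - q = 0 := by omega
      rw [e3, hw0, hmul0l]
    have hFm : F m = 0 := by
      show SymSq.mul (w (1 + m * q - q)) (z (ℓ - m * q)) = 0
      have e4 : ℓ - m * q = 0 := by
        have : q * m = m * q := Nat.mul_comm q m
        omega
      rw [e4, hz0, hmul0r]
    rw [hF0, hFm]
    simp
  have hφu : φ u ≠ 0 := by
    have hsum : φ u = (m : K) * cc (ℓ + 1) := by
      rw [hu, map_sum]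
      have hterm2 : ∀ s ∈ Finset.range m,
          φ (SymSq.mul (w (1 + s * q)) (z (ℓ - s * q))) = cc (ℓ + 1) := by
        intro s hs
        rw [Finset.mem_range] at hs
        obtain ⟨hi1, hi2⟩ := hidx1 s hs
        rw [hφ, hbwz (1 + s * q) (ℓ - s * q) (by omega) hi1 (by omega) (by omega)]
        congr 1
        omega
      rw [Finset.sum_congr rfl hterm2, Finset.sum_const, Finset.card_range, nsmul_eq_mul]
    rw [hsum, hcast1 m hmodd, one_mul]
    exact hcc1ne
  refine ⟨?_, ?_⟩
  · rcases Nat.eq_zero_or_pos (padicValNat 2 ℓ) with hα0 | hαpos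
    · -- trivial case q = 1
      have hq1' : q = 1 := by rw [hqdef, hα0, pow_zero]
      rw [hq1', Nat.sub_self, pow_zero, Module.End.one_eq_id, LinearMap.ker_id]
      exact bot_le
    · -- main case q ≥ 2
      have hq2 : 2 ≤ q := by
        rw [hqdef]
        calc 2 = 2 ^ 1 := by norm_num
        _ ≤ 2 ^ padicValNat 2 ℓ := Nat.pow_le_pow_right (by norm_num) hαpos
      -- vanishing of cc at shifted multiples
      have hccq1 : ∀ t, t ≤ ℓ → t % q = 1 → cc (t + q - 1) = 0 := by
        intro t ht hmod
        have h6 := Nat.div_add_mod t q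
        rw [hmod] at h6
        have hd : q ∣ t - 1 := ⟨t / q, by omega⟩
        have hlt : t - 1 < ℓ := by omega
        have := hstepq (t - 1) hd hlt
        apply hccv
        omega
      -- the symmetric bilinear form B
      set ψmat : (Fin ℓ ⊕ Fin ℓ) → (Fin ℓ ⊕ Fin ℓ) → K := fun i j =>
        match i, j with
        | Sum.inl a, Sum.inr c =>
            if ((c : ℕ) + 1) % q = 1 then cc ((a : ℕ) + 1 + ((c : ℕ) + 1) + q - 1) else 0
        | Sum.inr c, Sum.inl a =>
            if ((c : ℕ) + 1) % q = 1 then cc ((a : ℕ) + 1 + ((c : ℕ) + 1) + q - 1) else 0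
        | _, _ => 0
        with hψmat
      set B : V →ₗ[K] V →ₗ[K] K := bV.constr K (fun i => bV.constr K (fun j => ψmat i j))
        with hB
      have hBb : ∀ i j, B (bV i) (bV j) = ψmat i j := by
        intro i j
        rw [hB, Module.Basis.constr_basis, Module.Basis.constr_basis]
      have hBsym : ∀ x v : V, B x v = B v x := by
        have hflip : B = B.flip := by
          apply bV.ext
          intro i
          apply bV.ext
          intro j
          rw [LinearMap.flip_apply, hBb, hBb]
          cases i <;> cases j <;> rfl
        intro x v
        conv_lhs => rw [hflip]
        rfl
      -- its lift to the symmetric square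
      set BT : TensorProduct K V V →ₗ[K] K := TensorProduct.lift B with hBT
      have hkerBT : Submodule.span K
          {tz : TensorProduct K V V | ∃ x y : V, tz = x ⊗ₜ[K] y - y ⊗ₜ[K] x}
          ≤ LinearMap.ker BT := by
        rw [Submodule.span_le]
        rintro tz ⟨x, y, rfl⟩
        rw [SetLike.mem_coe, LinearMap.mem_ker, map_sub, hBT, TensorProduct.lift.tmul,
          TensorProduct.lift.tmul, hBsym, sub_self]
      set ψ : SymSq K V →ₗ[K] K := Submodule.liftQ _ BT hkerBT with hψ
      have hψmul : ∀ x y : V, ψ (SymSq.mul x y) = B x y := by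
        intro x y
        rw [hψ]
        show Submodule.liftQ _ BT hkerBT (Submodule.Quotient.mk (x ⊗ₜ[K] y)) = B x y
        rw [Submodule.liftQ_apply, hBT, TensorProduct.lift.tmul]
-- index helpers
      have hwbV : ∀ r, 1 ≤ r → r ≤ ℓ → ∀ h : r - 1 < ℓ, w r = bV (Sum.inl ⟨r - 1, h⟩) := by
        intro r h1 h2 h
        rw [hbVl]
        show w r = w (r - 1 + 1)
        congr 1
        omega
      have hzbV : ∀ r, 1 ≤ r → r ≤ ℓ → ∀ h : r - 1 < ℓ, z r = bV (Sum.inr ⟨r - 1, h⟩) := by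
        intro r h1 h2 h
        rw [hbVr]
        show z r = z (r - 1 + 1)
        congr 1
        omega
      -- values of B
      have hBwz : ∀ r t, 1 ≤ r → r ≤ ℓ → 1 ≤ t → t ≤ ℓ →
          B (w r) (z t) = if t % q = 1 then cc (r + t + q - 1) else 0 := by
        intro r t h1 h2 h3 h4
        rw [hwbV r h1 h2 (by omega), hzbV t h3 h4 (by omega), hBb]
        show (if ((t - 1) + 1) % q = 1 then cc ((r - 1) + 1 + ((t - 1) + 1) + q - 1) else 0) = _
        have e5 : (t - 1) + 1 = t := by omega
        have e6 : (r - 1) + 1 = r := by omega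
        rw [e5, e6]
      have hBwz0 : ∀ r t, r ≤ ℓ → t ≤ ℓ →
          B (w r) (z t) = if t % q = 1 then cc (r + t + q - 1) else 0 := by
        intro r t h2 h4
        rcases Nat.eq_zero_or_pos t with rfl | h3
        · rw [hz0, map_zero, Nat.zero_mod, if_neg (by omega)]
        rcases Nat.eq_zero_or_pos r with rfl | h1
        · rw [hw0, map_zero, LinearMap.zero_apply]
          split
          next hmod =>
            rw [Nat.zero_add]
            exact (hccq1 t h4 hmod).symm
          next => rfl
        · exact hBwz r t h1 h2 h3 h4
      have hBww0 : ∀ r t, r ≤ ℓ → t ≤ ℓ → B (w r) (w t) = 0 := by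
        intro r t h2 h4
        rcases Nat.eq_zero_or_pos t with rfl | h3
        · rw [hw0, map_zero]
        rcases Nat.eq_zero_or_pos r with rfl | h1
        · rw [hw0, map_zero, LinearMap.zero_apply]
        rw [hwbV r h1 h2 (by omega), hwbV t h3 h4 (by omega), hBb]
      have hBzz0 : ∀ r t, r ≤ ℓ → t ≤ ℓ → B (z r) (z t) = 0 := by
        intro r t h2 h4
        rcases Nat.eq_zero_or_pos t with rfl | h3
        · rw [hz0, map_zero]
        rcases Nat.eq_zero_or_pos r with rfl | h1
        · rw [hz0, map_zero, LinearMap.zero_apply]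
        rw [hzbV r h1 h2 (by omega), hzbV t h3 h4 (by omega), hBb]
      -- the combinatorial heart: summing over an antidiagonal window
      have hsum_main : ∀ ii jj, 1 ≤ ii → ii ≤ ℓ → 1 ≤ jj → jj ≤ ℓ →
          (∑ k ∈ Finset.range q, B (w (ii - k)) (z (jj - (q - 1 - k)))) = cc (ii + jj) := by
        intro ii jj hii1 hii2 hjj1 hjj2
        obtain ⟨kst, hkst⟩ : ∃ kk : ℕ, kk = (q - jj % q) % q := ⟨_, rfl⟩
        have hkstq : kst < q := by rw [hkst]; exact Nat.mod_lt _ (by omega)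
        have hjmod : jj % q < q := Nat.mod_lt _ (by omega)
        have hjdm := Nat.div_add_mod jj q
        have hdvdjk : q ∣ jj + kst := by
          rcases Nat.eq_zero_or_pos (jj % q) with hρ | hρ
          · have hk0 : kst = 0 := by rw [hkst, hρ, Nat.sub_zero, Nat.mod_self]
            refine ⟨jj / q, ?_⟩
            omega
          · have hks : kst = q - jj % q := by
              rw [hkst]
              exact Nat.mod_eq_of_lt (by omega)
            refine ⟨jj / q + 1, ?_⟩
            have h7 : q * (jj / q + 1) = q * (jj / q) + q := by ring
            omega
        have huniq : ∀ k, k < q → (jj - (q - 1 - k)) % q = 1 → k = kst := by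
          intro k hk hmod
          have ht0 : jj - (q - 1 - k) ≠ 0 := by
            intro h
            rw [h, Nat.zero_mod] at hmod
            omega
          have h8 : jj + k + 1 ≥ q + 1 := by omega
          have htv : jj - (q - 1 - k) = jj + k + 1 - q := by omega
          rw [htv] at hmod
          have h6 := Nat.div_add_mod (jj + k + 1 - q) q
          rw [hmod] at h6
          have hdvd2 : q ∣ jj + k := by
            refine ⟨(jj + k + 1 - q) / q + 1, ?_⟩
            have h7 : q * ((jj + k + 1 - q) / q + 1) = q * ((jj + k + 1 - q) / q) + q := by ring
            omega
          rcases le_total k kst with hle | hle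
          · have h10 : q ∣ kst - k := by
              have h11 := Nat.dvd_sub hdvdjk hdvd2
              have e : (jj + kst) - (jj + k) = kst - k := by omega
              rwa [e] at h11
            rcases Nat.eq_zero_or_pos (kst - k) with h | h
            · omega
            · have := Nat.le_of_dvd h h10
              omega
          · have h10 : q ∣ k - kst := by
              have h11 := Nat.dvd_sub hdvd2 hdvdjk
              have e : (jj + k) - (jj + kst) = k - kst := by omega
              rwa [e] at h11
            rcases Nat.eq_zero_or_pos (k - kst) with h | h
            · omega
            · have := Nat.le_of_dvd h h10
              omega
        have hval : B (w (ii - kst)) (z (jj - (q - 1 - kst))) = cc (ii + jj) := by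
          rcases Nat.eq_zero_or_pos (jj % q) with hρ | hρ
          · -- case q ∣ jj
            have hk0 : kst = 0 := by rw [hkst, hρ, Nat.sub_zero, Nat.mod_self]
            have hjq : q ≤ jj := Nat.le_of_dvd (by omega) (Nat.dvd_of_mod_eq_zero hρ)
            have htmod : (jj - (q - 1 - 0)) % q = 1 := by
              obtain ⟨d, hd⟩ : q ∣ jj - q := Nat.dvd_sub (Nat.dvd_of_mod_eq_zero hρ) dvd_rfl
              have e7 : jj - (q - 1 - 0) = q * d + 1 := by omega
              rw [e7, Nat.mul_add_mod]
              exact Nat.mod_eq_of_lt (by omega)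
            rw [hk0, hBwz0 _ _ (by omega) (by omega), if_pos htmod]
            congr 1
            omega
          · -- case jj % q = ρ ≥ 1
            have hks : kst = q - jj % q := by
              rw [hkst]
              exact Nat.mod_eq_of_lt (by omega)
            obtain ⟨d, hd⟩ : q ∣ jj - jj % q := Nat.dvd_sub_mod jj
            have htmod : (jj - (q - 1 - kst)) % q = 1 := by
              have e7 : jj - (q - 1 - kst) = q * d + 1 := by omega
              rw [e7, Nat.mul_add_mod]
              exact Nat.mod_eq_of_lt (by omega)
            rw [hBwz0 _ _ (by omega) (by omega), if_pos htmod]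
            rcases Nat.lt_or_ge (ii + jj % q) (q + 1) with hcase | hcase
            · -- both sides vanish
              have hii0 : ii - kst = 0 := by omega
              have hstep2 : jj - jj % q + q ≤ ℓ := hstepq _ ⟨d, hd⟩ (by omega)
              have e8 : ii - kst + (jj - (q - 1 - kst)) + q - 1 = (jj - jj % q) + q := by omega
              rw [e8, hccv _ hstep2, hccv _ (by omega : ii + jj ≤ ℓ)]
            · -- the generic case
              congr 1
              omega
        rw [Finset.sum_eq_single kst]
        · exact hval
        · intro k hk hkne
          have hne : ¬ ((jj - (q - 1 - k)) % q = 1) := fun hmod =>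
            hkne (huniq k (Finset.mem_range.mp hk) hmod)
          rw [hBwz0 _ _ (by omega) (by omega), if_neg hne]
        · intro habs
          exact absurd (Finset.mem_range.mpr hkstq) habs
      -- oddness of the binomial coefficients
      have hodd : ∀ k, k < q → ((q - 1).choose k) % 2 = 1 := by
        intro k hk
        have hkq : k ≤ 2 ^ padicValNat 2 ℓ - 1 := by omega
        have := choose_two_pow_sub_one_odd (padicValNat 2 ℓ) k hkq
        rw [hqdef]
        exact this
      -- the three case computations
      have hwz_case : ∀ ii jj, 1 ≤ ii → ii ≤ ℓ → 1 ≤ jj → jj ≤ ℓ →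
          ψ ((et ^ (q - 1)) (SymSq.mul (w ii) (z jj))) = cc (ii + jj) := by
        intro ii jj h1 h2 h3 h4
        rw [L1, map_sum]
        have hq1' : q - 1 + 1 = q := by omega
        rw [hq1']
        have hterm3 : ∀ k ∈ Finset.range q,
            ψ ((q - 1).choose k • SymSq.mul ((e ^ k) (w ii)) ((e ^ (q - 1 - k)) (z jj)))
            = B (w (ii - k)) (z (jj - (q - 1 - k))) := by
          intro k hk
          rw [map_nsmul, nsmul_eq_mul, hcast1 _ (hodd k (Finset.mem_range.mp hk)), one_mul,
            hwpow _ _ h2, hzpow _ _ h4, hψmul]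
        rw [Finset.sum_congr rfl hterm3]
        exact hsum_main ii jj h1 h2 h3 h4
      have hww_case : ∀ ii jj, ii ≤ ℓ → jj ≤ ℓ →
          ψ ((et ^ (q - 1)) (SymSq.mul (w ii) (w jj))) = 0 := by
        intro ii jj h2 h4
        rw [L1, map_sum]
        apply Finset.sum_eq_zero
        intro k hk
        rw [map_nsmul, nsmul_eq_mul, hwpow _ _ h2, hwpow _ _ h4, hψmul,
          hBww0 _ _ (by omega) (by omega), mul_zero]
      have hzz_case : ∀ ii jj, ii ≤ ℓ → jj ≤ ℓ →
          ψ ((et ^ (q - 1)) (SymSq.mul (z ii) (z jj))) = 0 := by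
        intro ii jj h2 h4
        rw [L1, map_sum]
        apply Finset.sum_eq_zero
        intro k hk
        rw [map_nsmul, nsmul_eq_mul, hzpow _ _ h2, hzpow _ _ h4, hψmul,
          hBzz0 _ _ (by omega) (by omega), mul_zero]
      -- the main identity on basis vectors
      have hmain : ∀ i j : Fin ℓ ⊕ Fin ℓ,
          φ (SymSq.mul (bV i) (bV j)) = ψ ((et ^ (q - 1)) (SymSq.mul (bV i) (bV j))) := by
        intro i j
        rw [hφ]
        cases i with
        | inl a =>
          cases j with
          | inl a' =>
            rw [hbVl, hbVl, hww_case _ _ (by omega) (by omega)]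
            exact hWsing _ (hwW _) _ (hwW _)
          | inr c =>
            rw [hbVl, hbVr, hwz_case _ _ (by omega) (by omega) (by omega) (by omega)]
            exact hbwz _ _ (by omega) (by omega) (by omega) (by omega)
        | inr c =>
          cases j with
          | inl a =>
            rw [hbVr, hbVl, hmulcomm, hwz_case _ _ (by omega) (by omega) (by omega) (by omega)]
            rw [hbsymm, hbwz _ _ (by omega) (by omega) (by omega) (by omega)]
          | inr c' =>
            rw [hbVr, hbVr, hzz_case _ _ (by omega) (by omega)]
            exact hZsing _ (hzZ _) _ (hzZ _)
      -- conclude via the tensor basis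
      have hcomp : φ ∘ₗ Submodule.mkQ _ = (ψ ∘ₗ (et ^ (q - 1))) ∘ₗ Submodule.mkQ _ := by
        apply (bV.tensorProduct bV).ext
        rintro ⟨i, j⟩
        rw [Module.Basis.tensorProduct_apply]
        simp only [LinearMap.comp_apply, Submodule.mkQ_apply]
        exact hmain i j
      intro v hv
      obtain ⟨t, rfl⟩ := Submodule.Quotient.mk_surjective _ v
      rw [LinearMap.mem_ker] at hv ⊢
      have h := LinearMap.congr_fun hcomp t
      simp only [LinearMap.comp_apply, Submodule.mkQ_apply] at h
      rw [h, hv, map_zero]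
  · intro hle
    have hmem : u ∈ LinearMap.ker (et ^ q) := LinearMap.mem_ker.mpr hker
    exact hφu (LinearMap.mem_ker.mp (hle hmem))
end

section
/- Let (V, b) be a symplectic vector space of dimension 2ℓ (ℓ ≥ 1) over an algebraically closed field K of characteristic 2, and let e ∈ sp(V) be nilpotent with a single Jordan block of size 2ℓ on V, i.e. e^{2ℓ−1} ≠ 0 and e^{2ℓ} = 0. Let ẽ be the map induced by e on S²(V), let φ : S²(V) → K be determined by φ(xy) = b(x, y), and set α = ν₂(2ℓ). Then ker(ẽ^{2^α − 1}) ⊆ ker φ, and ker(ẽ^{2^α}) ⊄ ker φ. -/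
open scoped TensorProduct

section Aux

variable {K V : Type*} [Field K] [AddCommGroup V] [Module K V]

lemma SymSq.zero_mul (y : V) : SymSq.mul (K := K) (0:V) y = 0 := by
  simp [SymSq.mul, TensorProduct.zero_tmul]

lemma SymSq.mul_zero (x : V) : SymSq.mul (K := K) x (0:V) = 0 := by
  simp [SymSq.mul, TensorProduct.tmul_zero]

lemma char2_add_self (K : Type*) {V : Type*} [Field K] [CharP K 2] [AddCommGroup V]
    [Module K V] (z : V) : z + z = 0 := by
  rw [← two_smul K z, show (2:K) = 0 by exact_mod_cast CharP.cast_eq_zero K 2, zero_smul]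

lemma et_pow_two_pow [CharP K 2] (e : Module.End K V) (et : Module.End K (SymSq K V))
    (het : ∀ x y : V, et (SymSq.mul x y) = SymSq.mul (e x) y + SymSq.mul x (e y))
    (k : ℕ) (x y : V) :
    (et ^ (2^k)) (SymSq.mul x y)
      = SymSq.mul ((e ^ (2^k)) x) y + SymSq.mul x ((e ^ (2^k)) y) := by
  induction k generalizing x y with
  | zero => simp only [pow_zero, pow_one]; exact het x y
  | succ k ih =>
    have hp : (2:ℕ)^(k+1) = 2^k + 2^k := by ring
    rw [hp, pow_add, Module.End.mul_apply, ih, map_add, ih, ih]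
    have h1 : ∀ z : V, (e ^ (2^k)) ((e ^ (2^k)) z) = (e ^ (2^k + 2^k)) z := by
      intro z; rw [pow_add, Module.End.mul_apply]
    rw [h1, h1]
    rw [show SymSq.mul ((e ^ (2^k+2^k)) x) y + SymSq.mul ((e ^ (2^k)) x) ((e ^ (2^k)) y)
        + (SymSq.mul ((e ^ (2^k)) x) ((e ^ (2^k)) y) + SymSq.mul x ((e ^ (2^k+2^k)) y))
        = (SymSq.mul ((e ^ (2^k+2^k)) x) y + SymSq.mul x ((e ^ (2^k+2^k)) y))
          + (SymSq.mul ((e ^ (2^k)) x) ((e ^ (2^k)) y)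
            + SymSq.mul ((e ^ (2^k)) x) ((e ^ (2^k)) y)) by abel]
    rw [char2_add_self K _, add_zero]

lemma et_pow_two_pow_sub_one [CharP K 2] (e : Module.End K V) (et : Module.End K (SymSq K V))
    (het : ∀ x y : V, et (SymSq.mul x y) = SymSq.mul (e x) y + SymSq.mul x (e y))
    (k : ℕ) (x y : V) :
    (et ^ (2^k - 1)) (SymSq.mul x y)
      = ∑ t ∈ Finset.range (2^k), SymSq.mul ((e ^ t) x) ((e ^ (2^k - 1 - t)) y) := by
  induction k generalizing x y with
  | zero => simp [SymSq.mul]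
  | succ k ih =>
    have h2k : 1 ≤ (2:ℕ)^k := Nat.one_le_two_pow
    have h1 : (2:ℕ)^(k+1) - 1 = 2^k + (2^k - 1) := by
      have : (2:ℕ)^(k+1) = 2^k + 2^k := by ring
      omega
    rw [h1, pow_add, Module.End.mul_apply, ih, map_sum]
    have hterm : ∀ t ∈ Finset.range (2^k),
        (et ^ (2^k)) (SymSq.mul ((e ^ t) x) ((e ^ (2^k - 1 - t)) y))
        = SymSq.mul ((e ^ (2^k + t)) x) ((e ^ (2^k - 1 - t)) y)
          + SymSq.mul ((e ^ t) x) ((e ^ (2^k + (2^k - 1 - t))) y) := by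
      intro t ht
      rw [et_pow_two_pow e et het]
      congr 2
      · rw [← Module.End.mul_apply, ← pow_add]
      · rw [← Module.End.mul_apply, ← pow_add]
    rw [Finset.sum_congr rfl hterm, Finset.sum_add_distrib]
    rw [show (2:ℕ)^(k+1) = 2^k + 2^k from by ring, Finset.sum_range_add, add_comm]
    congr 1
    · apply Finset.sum_congr rfl
      intro t ht
      simp only [Finset.mem_range] at ht
      have h3 : 2^k + (2^k - 1 - t) = 2^k + (2^k-1) - t := by omega
      rw [h3]
    · apply Finset.sum_congr rfl
      intro t ht
      simp only [Finset.mem_range] at ht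
      have h3 : 2^k + (2^k-1) - (2^k + t) = 2^k - 1 - t := by omega
      rw [h3]

end Aux

lemma arith_unique (q i j t t' : ℕ) (hq0 : 0 < q) (ht : t < q) (ht' : t' < q)
    (hti : t ≤ i) (htj : q ≤ t + j + 1) (ht'i : t' ≤ i) (ht'j : q ≤ t' + j + 1)
    (hc : (i - t) % (2*q) = (j + t + 1 - q) % (2*q))
    (hc' : (i - t') % (2*q) = (j + t' + 1 - q) % (2*q)) : t = t' := by
  have h1 : ((2*q : ℕ) : ℤ) ∣ ((j + t + 1 - q : ℕ) : ℤ) - ((i - t : ℕ) : ℤ) :=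
    (Nat.modEq_iff_dvd).mp hc
  have h2 : ((2*q : ℕ) : ℤ) ∣ ((j + t' + 1 - q : ℕ) : ℤ) - ((i - t' : ℕ) : ℤ) :=
    (Nat.modEq_iff_dvd).mp hc'
  rw [Nat.cast_sub hti, Nat.cast_sub (by omega : q ≤ j + t + 1)] at h1
  rw [Nat.cast_sub ht'i, Nat.cast_sub (by omega : q ≤ j + t' + 1)] at h2
  have h3 : ((2*q : ℕ) : ℤ) ∣ 2*(t:ℤ) - 2*(t':ℤ) := by
    have := dvd_sub h1 h2
    have heq : (((j:ℕ) + t + 1 : ℕ) : ℤ) - (q:ℕ) - ((i:ℤ) - (t:ℕ))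
        - ((((j:ℕ) + t' + 1 : ℕ) : ℤ) - (q:ℕ) - ((i:ℤ) - (t':ℕ)))
        = 2*(t:ℤ) - 2*(t':ℤ) := by push_cast; ring
    rwa [heq] at this
  obtain ⟨k, hk⟩ := h3
  have hk' : (t:ℤ) - (t':ℤ) = (q:ℤ) * k := by
    push_cast at hk
    linarith
  have hq1 : (0:ℤ) < (q:ℤ) := by exact_mod_cast hq0
  have hb1 : (t:ℤ) - (t':ℤ) < q := by push_cast; omega
  have hb2 : -(q:ℤ) < (t:ℤ) - (t':ℤ) := by push_cast; omega
  have hk0 : k = 0 := by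
    rcases lt_trichotomy k 0 with h | h | h
    · have : (q:ℤ) * k ≤ q * (-1) := by
        apply mul_le_mul_of_nonneg_left (by omega) (le_of_lt hq1)
      omega
    · exact h
    · have : (q:ℤ) * 1 ≤ q * k := by
        apply mul_le_mul_of_nonneg_left (by omega) (le_of_lt hq1)
      omega
  rw [hk0, mul_zero] at hk'
  omega

lemma arith_exists (q n u i j : ℕ) (hq0 : 0 < q) (h2q : 2 ∣ q) (hnu : n = q * u)
    (hu : u % 2 = 1) (hi : i < n) (hj : j < n) (hpar : (i + j) % 2 = 1)
    (hsum : n ≤ i + j + 1) :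
    ∃ t0, t0 < q ∧ t0 ≤ i ∧ q ≤ t0 + j + 1 ∧
      (i - t0) % (2*q) = (j + t0 + 1 - q) % (2*q) := by
  have hq1 : (0:ℤ) < (q:ℤ) := by exact_mod_cast hq0
  have h2 : (2:ℤ) ∣ ((q:ℤ) - 1 + i - j) := by omega
  obtain ⟨t1, ht1⟩ := h2
  set t0z : ℤ := t1 % q with ht0z
  have ht0a : 0 ≤ t0z := Int.emod_nonneg t1 (by omega)
  have ht0b : t0z < q := Int.emod_lt_of_pos t1 hq1
  set t0 : ℕ := t0z.toNat with ht0
  have hcast : (t0:ℤ) = t0z := Int.toNat_of_nonneg ht0a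
  have ht0q : t0 < q := by omega
  have hdvd : ((2*q : ℕ) : ℤ) ∣ ((j:ℤ) + t0 + 1 - q) - ((i:ℤ) - t0) := by
    have hdiv := Int.emod_add_mul_ediv t1 (q:ℤ)
    refine ⟨-(t1 / q), ?_⟩
    have : ((j:ℤ) + t0 + 1 - q) - ((i:ℤ) - t0) = 2*(t0:ℤ) - 2*t1 := by linarith
    rw [this, hcast]
    push_cast
    linarith
  have hnz : (n:ℤ) = (q:ℤ) * u := by exact_mod_cast hnu
  -- helper: contradiction from (2q) ∣ X with n - q + 2 ≤ X ≤ n + q - 2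
  have hcontra : ∀ X : ℤ, ((2*q : ℕ) : ℤ) ∣ X → (n:ℤ) - q + 2 ≤ X → X ≤ (n:ℤ) + q - 2 → False := by
    intro X hX hl hr
    obtain ⟨w, hw⟩ := hX
    push_cast at hw
    have hw1 : (u:ℤ) - 1 < 2*w := by
      have h' : (q:ℤ) * ((u:ℤ)-1) < (q:ℤ) * (2*w) := by nlinarith
      exact lt_of_mul_lt_mul_left h' (le_of_lt hq1)
    have hw2 : 2*w < (u:ℤ) + 1 := by
      have h' : (q:ℤ) * (2*w) < (q:ℤ) * ((u:ℤ)+1) := by nlinarith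
      exact lt_of_mul_lt_mul_left h' (le_of_lt hq1)
    have : (u:ℤ) = 2*w := by omega
    omega
  have hb1 : t0 ≤ i := by
    by_contra hlt
    push_neg at hlt
    apply hcontra _ hdvd
    · omega
    · omega
  have hb2 : q ≤ t0 + j + 1 := by
    by_contra hlt
    push_neg at hlt
    have hdvd' : ((2*q : ℕ) : ℤ) ∣ ((i:ℤ) - t0) - ((j:ℤ) + t0 + 1 - q) := by
      have := dvd_neg.mpr hdvd
      rwa [neg_sub] at this
    apply hcontra _ hdvd'
    · omega
    · omega
  refine ⟨t0, ht0q, hb1, hb2, ?_⟩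
  have : Nat.ModEq (2*q) (i - t0) (j + t0 + 1 - q) := by
    rw [Nat.modEq_iff_dvd]
    rw [Nat.cast_sub hb1, Nat.cast_sub (by omega : q ≤ j + t0 + 1)]
    have h' := hdvd
    push_cast at h' ⊢
    convert h' using 1
  exact this


lemma jordan_li {K V : Type*} [Field K] [AddCommGroup V] [Module K V]
    (n : ℕ) (e : Module.End K V) (v : V)
    (hv : (e ^ (n-1)) v ≠ 0) (hek : ∀ k, n ≤ k → e ^ k = 0) :
    LinearIndependent K (fun a : Fin n => (e ^ (n - 1 - (a:ℕ))) v) := by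
  classical
  rw [Fintype.linearIndependent_iff]
  intro g hg
  by_contra hc
  push_neg at hc
  obtain ⟨a₀, ha₀⟩ := hc
  set S : Finset (Fin n) := Finset.univ.filter (fun a => g a ≠ 0) with hS
  have hSne : S.Nonempty := ⟨a₀, by simp [hS, ha₀]⟩
  set m := S.max' hSne with hm
  have hmS : m ∈ S := S.max'_mem hSne
  have hgm : g m ≠ 0 := by simpa [hS] using hmS
  have happ := congrArg (fun x => (e ^ (m:ℕ)) x) hg
  simp only [map_sum, map_smul, map_zero] at happ
  have hcomp : ∀ a : Fin n, (e ^ (m:ℕ)) ((e ^ (n-1-(a:ℕ))) v)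
      = (e ^ ((m:ℕ) + (n-1-(a:ℕ)))) v := by
    intro a; rw [← Module.End.mul_apply, ← pow_add]
  simp only [hcomp] at happ
  rw [Finset.sum_eq_single m] at happ
  · have hmm : (m:ℕ) + (n-1-(m:ℕ)) = n-1 := by have := m.isLt; omega
    rw [hmm] at happ
    exact hv ((smul_eq_zero.mp happ).resolve_left hgm)
  · intro a _ hne
    by_cases hga : g a = 0
    · simp [hga]
    · have haS : a ∈ S := by simp [hS, hga]
      have hle : (a:ℕ) ≤ (m:ℕ) := S.le_max' a haS
      have hlt : (a:ℕ) < (m:ℕ) := lt_of_le_of_ne hle (fun h => hne (Fin.ext h))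
      have hbig : n ≤ (m:ℕ) + (n-1-(a:ℕ)) := by
        have := a.isLt; have := m.isLt; omega
      rw [hek _ hbig]; simp
  · simp

/-- Lemma: for nilpotent `e ∈ sp(V)` with `V ↓ K[e] = V(2ℓ)` (a single Jordan block of size
`2ℓ`), with `α = ν₂(2ℓ)`: `ker(ẽ^(2^α - 1)) ⊆ ker φ` and `ker(ẽ^(2^α)) ⊄ ker φ`. -/
theorem stmt15 (K : Type*) [Field K] [IsAlgClosed K] [CharP K 2]
    (V : Type*) [AddCommGroup V] [Module K V] [FiniteDimensional K V]
    (ℓ : ℕ) (hl : 1 ≤ ℓ) (hdim : Module.finrank K V = 2 * ℓ)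
    (b : V →ₗ[K] V →ₗ[K] K)
    (halt : ∀ v : V, b v v = 0)
    (hnd : ∀ v : V, (∀ w : V, b v w = 0) → v = 0)
    (e : Module.End K V)
    (hsp : ∀ v w : V, b (e v) w + b v (e w) = 0)
    (he1 : e ^ (2 * ℓ - 1) ≠ 0) (he2 : e ^ (2 * ℓ) = 0)
    (et : Module.End K (SymSq K V))
    (het : ∀ x y : V, et (SymSq.mul x y) = SymSq.mul (e x) y + SymSq.mul x (e y))
    (φ : SymSq K V →ₗ[K] K)
    (hφ : ∀ x y : V, φ (SymSq.mul x y) = b x y) :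
    LinearMap.ker (et ^ (2 ^ padicValNat 2 (2 * ℓ) - 1)) ≤ LinearMap.ker φ ∧
      ¬ LinearMap.ker (et ^ (2 ^ padicValNat 2 (2 * ℓ))) ≤ LinearMap.ker φ := by
  classical
  set n := 2 * ℓ with hn_def
  have hn0 : 0 < n := by omega
  set α := padicValNat 2 n with hα_def
  set q := 2 ^ α with hq_def
  have hq0 : 0 < q := by rw [hq_def]; positivity
  have hqdvd : q ∣ n := by rw [hq_def, hα_def]; exact pow_padicValNat_dvd
  have h2n : 2 ∣ n := ⟨ℓ, hn_def⟩
  haveI : Fact (Nat.Prime 2) := ⟨Nat.prime_two⟩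
  have hndvd : ¬ (2^(α+1) ∣ n) := by
    rw [hα_def]; exact pow_succ_padicValNat_not_dvd (by omega)
  have hα1 : 1 ≤ α := by
    by_contra hcon
    push_neg at hcon
    have hα0 : α = 0 := by omega
    rw [hα0] at hndvd
    simp at hndvd
    omega
  have h2q : 2 ∣ q := by rw [hq_def]; exact dvd_pow_self 2 (by omega)
  obtain ⟨u, hu⟩ := hqdvd
  have huodd : u % 2 = 1 := by
    rcases Nat.even_or_odd u with he | ho
    · obtain ⟨u', hu'⟩ := he
      exfalso
      apply hndvd
      exact ⟨u', by rw [hu, hq_def, hu', pow_succ]; ring⟩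
    · exact Nat.odd_iff.mp ho
  have hqn : q ≤ n := Nat.le_of_dvd hn0 ⟨u, hu⟩
  have hepow : ∀ k, n ≤ k → e ^ k = 0 := by
    intro k hk
    have h : e ^ k = e ^ n * e ^ (k - n) := by rw [← pow_add]; congr 1; omega
    rw [h, he2, zero_mul]
  obtain ⟨v, hv⟩ : ∃ v : V, (e ^ (n-1)) v ≠ 0 := by
    by_contra h
    push_neg at h
    exact he1 (LinearMap.ext fun x => h x)
  set w : ℕ → V := fun a => (e ^ (n - 1 - a)) v with hw_def
  have hw_le : ∀ t a, t ≤ a → a < n → (e ^ t) (w a) = w (a - t) := by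
    intro t a hta han
    simp only [hw_def]
    rw [← Module.End.mul_apply, ← pow_add]
    congr 2
    omega
  have hw_gt : ∀ t a, a < t → a < n → (e ^ t) (w a) = 0 := by
    intro t a hat han
    simp only [hw_def]
    rw [← Module.End.mul_apply, ← pow_add, hepow _ (by omega)]
    rfl
  have hchar2 : ∀ s t : K, s + t = 0 → s = t := by
    intro s t h
    have h2 : (2:K) = 0 := by exact_mod_cast CharP.cast_eq_zero K 2
    linear_combination h - t * h2
  have hb_shift : ∀ x y, b (e x) y = b x (e y) := fun x y => hchar2 _ _ (hsp x y)
  have hb_shift_pow : ∀ k, ∀ x y, b ((e^k) x) y = b x ((e^k) y) := by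
    intro k
    induction k with
    | zero => intro x y; simp
    | succ k ih =>
      intro x y
      calc b ((e^(k+1)) x) y = b ((e^k) (e x)) y := by rw [pow_succ, Module.End.mul_apply]
      _ = b (e x) ((e^k) y) := ih (e x) y
      _ = b x (e ((e^k) y)) := hb_shift x _
      _ = b x ((e^(k+1)) y) := by rw [pow_succ', Module.End.mul_apply]
  have hb_pair : ∀ k l : ℕ, b ((e^k) v) ((e^l) v) = b ((e^(k+l)) v) v := by
    intro k l
    calc b ((e^k) v) ((e^l) v) = b ((e^l) ((e^k) v)) v := (hb_shift_pow l _ v).symm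
    _ = b ((e^(k+l)) v) v := by rw [← Module.End.mul_apply, ← pow_add, add_comm l k]
  set c : ℕ → K := fun s => b ((e ^ (2*(n-1) - s)) v) v with hc_def
  have hbc : ∀ a a' : ℕ, a < n → a' < n → b (w a) (w a') = c (a + a') := by
    intro a a' ha ha'
    simp only [hw_def, hc_def]
    rw [hb_pair]
    have h : (n-1-a)+(n-1-a') = 2*(n-1) - (a+a') := by omega
    rw [h]
  have hc_even : ∀ s, s % 2 = 0 → c s = 0 := by
    intro s hs
    simp only [hc_def]
    by_cases hbig : s ≤ 2*(n-1)
    · have hpp : 2*(n-1) - s = (2*(n-1) - s)/2 + (2*(n-1) - s)/2 := by omega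
      rw [hpp, ← hb_pair, halt]
    · rw [show 2*(n-1) - s = 0 by omega, pow_zero]
      simpa using halt v
  have hc_low : ∀ s, s + 2 ≤ n → c s = 0 := by
    intro s hs
    simp only [hc_def]
    rw [hepow _ (by omega)]
    simp
  have hli := jordan_li n e v hv hepow
  haveI : Nonempty (Fin n) := ⟨⟨0, hn0⟩⟩
  set B : Module.Basis (Fin n) K V := basisOfLinearIndependentOfCardEqFinrank hli (by simp [hdim]) with hB_def
  have hB : ∀ a : Fin n, B a = w (a:ℕ) := fun a => by
    rw [hB_def, coe_basisOfLinearIndependentOfCardEqFinrank]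
  have hcn1 : c (n-1) ≠ 0 := by
    intro h0
    apply hv
    apply hnd
    intro x
    have hfun : (b ((e^(n-1)) v)) = (0 : V →ₗ[K] K) := by
      apply B.ext
      intro a
      rw [hB a]
      simp only [hw_def]
      rw [hb_pair, LinearMap.zero_apply]
      by_cases ha : (a:ℕ) = n-1
      · have h1 : (n-1) + (n-1-(a:ℕ)) = n-1 := by rw [ha]; omega
        rw [h1]
        have h2 : c (n-1) = b ((e^(n-1)) v) v := by
          simp only [hc_def]
          rw [show 2*(n-1)-(n-1) = n-1 by omega]
        rw [← h2]
        exact h0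
      · have h1 : n ≤ (n-1) + (n-1-(a:ℕ)) := by have := a.isLt; omega
        rw [hepow _ h1]
        simp
    exact (LinearMap.congr_fun hfun x).trans (by simp)
  -- span of products of basis vectors
  set R := Submodule.span K {z : TensorProduct K V V | ∃ x y : V, z = x ⊗ₜ[K] y - y ⊗ₜ[K] x} with hR
  have hspan : Submodule.span K {z : SymSq K V | ∃ a a' : Fin n, z = SymSq.mul (w (a:ℕ)) (w (a':ℕ))} = ⊤ := by
    rw [eq_top_iff]
    set BT : Module.Basis (Fin n × Fin n) K (TensorProduct K V V) := Module.Basis.tensorProduct B B with hBT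
    have h1 : Submodule.map R.mkQ (Submodule.span K (Set.range BT))
        ≤ Submodule.span K {z : SymSq K V | ∃ a a' : Fin n, z = SymSq.mul (w (a:ℕ)) (w (a':ℕ))} := by
      rw [Submodule.map_span]
      apply Submodule.span_mono
      rintro _ ⟨_, ⟨⟨a, a'⟩, rfl⟩, rfl⟩
      refine ⟨a, a', ?_⟩
      rw [hBT, Module.Basis.tensorProduct_apply, hB, hB]
      rfl
    rw [BT.span_eq, Submodule.map_top, Submodule.range_mkQ] at h1
    exact h1
  -- the symmetric bilinear form and ψ
  set hh : ℕ → ℕ → K := fun a a' => if a % (2*q) = a' % (2*q) then c (a + a' + (q-1)) else 0 with hhh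
  have hhsymm : ∀ a a', hh a a' = hh a' a := by
    intro a a'
    simp only [hhh]
    by_cases hcond : a % (2*q) = a' % (2*q)
    · rw [if_pos hcond, if_pos hcond.symm, add_comm a a']
    · rw [if_neg hcond, if_neg (fun h => hcond h.symm)]
  set sB : V →ₗ[K] V →ₗ[K] K := B.constr K (fun a => B.constr K (fun a' => hh (a:ℕ) (a':ℕ))) with hsB
  have hs' : ∀ a a' : Fin n, sB (w (a:ℕ)) (w (a':ℕ)) = hh a a' := by
    intro a a'
    rw [← hB, ← hB, hsB, Module.Basis.constr_basis, Module.Basis.constr_basis]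
  have hssym : ∀ x y, sB x y = sB y x := by
    have hflip : sB = sB.flip := by
      apply B.ext
      intro a
      apply B.ext
      intro a'
      rw [LinearMap.flip_apply, hB, hB, hs', hs', hhsymm]
    intro x y
    conv_lhs => rw [hflip]
    rfl
  have hkerle : R ≤ LinearMap.ker (TensorProduct.lift sB) := by
    rw [hR, Submodule.span_le]
    rintro _ ⟨x, y, rfl⟩
    simp only [SetLike.mem_coe, LinearMap.mem_ker, map_sub, TensorProduct.lift.tmul]
    rw [hssym x y, sub_self]
  set ψ : SymSq K V →ₗ[K] K := R.liftQ (TensorProduct.lift sB) hkerle with hψdef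
  have hψ : ∀ x y : V, ψ (SymSq.mul x y) = sB x y := by
    intro x y
    show R.liftQ (TensorProduct.lift sB) hkerle (Submodule.Quotient.mk (x ⊗ₜ[K] y)) = _
    rw [Submodule.liftQ_apply, TensorProduct.lift.tmul]
  -- the L1 / L2 formulas
  have hL1 := et_pow_two_pow_sub_one e et het α
  rw [← hq_def] at hL1
  have hL2 := et_pow_two_pow e et het α
  rw [← hq_def] at hL2
  -- factorization φ = ψ ∘ et^(q-1)
  have hfact : φ = ψ ∘ₗ (et ^ (q - 1)) := by
    apply LinearMap.ext_on hspan
    rintro z ⟨i, j, rfl⟩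
    have hij : (i:ℕ) < n := i.isLt
    have hij' : (j:ℕ) < n := j.isLt
    show φ _ = ψ ((et ^ (q-1)) _)
    rw [hφ, hbc _ _ hij hij', hL1, map_sum]
    have hterm : ∀ t ∈ Finset.range q,
        ψ (SymSq.mul ((e ^ t) (w (i:ℕ))) ((e ^ (q - 1 - t)) (w (j:ℕ))))
        = if t ≤ (i:ℕ) ∧ q ≤ t + (j:ℕ) + 1
             ∧ ((i:ℕ) - t) % (2*q) = ((j:ℕ) + t + 1 - q) % (2*q)
          then c ((i:ℕ) + (j:ℕ)) else 0 := by
      intro t ht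
      rw [Finset.mem_range] at ht
      by_cases h1 : t ≤ (i:ℕ)
      · by_cases h2 : q ≤ t + (j:ℕ) + 1
        · rw [hw_le t _ h1 hij, hw_le (q-1-t) _ (by omega) hij']
          have hj2 : (j:ℕ) - (q-1-t) = (j:ℕ) + t + 1 - q := by omega
          rw [hj2, hψ]
          have hlt1 : (i:ℕ) - t < n := by omega
          have hlt2 : (j:ℕ) + t + 1 - q < n := by omega
          refine (hs' ⟨(i:ℕ) - t, hlt1⟩ ⟨(j:ℕ) + t + 1 - q, hlt2⟩).trans ?_
          simp only [hhh]
          by_cases hcong : ((i:ℕ) - t) % (2*q) = ((j:ℕ) + t + 1 - q) % (2*q)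
          · rw [if_pos hcong, if_pos ⟨h1, h2, hcong⟩]
            congr 1
            omega
          · rw [if_neg hcong, if_neg (by tauto)]
        · rw [hw_gt (q-1-t) _ (by omega) hij', SymSq.mul_zero, map_zero,
            if_neg (by tauto)]
      · rw [hw_gt t _ (by omega) hij, SymSq.zero_mul, map_zero, if_neg (by tauto)]
    rw [Finset.sum_congr rfl hterm]
    by_cases hpar : ((i:ℕ) + (j:ℕ)) % 2 = 1
    · by_cases hbig : n ≤ (i:ℕ) + (j:ℕ) + 1
      · obtain ⟨t0, ht0q, ht0i, ht0j, ht0c⟩ :=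
          arith_exists q n u (i:ℕ) (j:ℕ) hq0 h2q hu huodd hij hij' hpar hbig
        rw [Finset.sum_eq_single_of_mem t0 (Finset.mem_range.mpr ht0q)]
        · rw [if_pos ⟨ht0i, ht0j, ht0c⟩]
        · intro t ht hne
          rw [Finset.mem_range] at ht
          rw [if_neg]
          rintro ⟨hta, htb, htc⟩
          exact hne (arith_unique q (i:ℕ) (j:ℕ) t t0 hq0 ht ht0q hta htb ht0i ht0j htc ht0c)
      · push_neg at hbig
        have hc0 : c ((i:ℕ)+(j:ℕ)) = 0 := hc_low _ (by omega)
        rw [hc0]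
        exact (Finset.sum_eq_zero (fun t _ => by simp [hc0])).symm
    · have hc0 : c ((i:ℕ)+(j:ℕ)) = 0 := hc_even _ (by omega)
      rw [hc0]
      exact (Finset.sum_eq_zero (fun t _ => by simp [hc0])).symm
  have claim1 : LinearMap.ker (et ^ (q - 1)) ≤ LinearMap.ker φ := by
    intro z hz
    rw [LinearMap.mem_ker] at hz ⊢
    rw [hfact, LinearMap.comp_apply, hz, map_zero]
  -- claim 2: explicit kernel vector not killed by φ
  set S2 : Finset ℕ := (Finset.range n).filter (fun a => a % q = 0) with hS2
  have hmemS2 : ∀ a ∈ S2, a < n ∧ q ∣ a := by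
    intro a ha
    simp only [hS2, Finset.mem_filter, Finset.mem_range] at ha
    exact ⟨ha.1, Nat.dvd_of_mod_eq_zero ha.2⟩
  set z : SymSq K V := ∑ a ∈ S2, SymSq.mul (w a) (w (n-1-a)) with hzdef
  have hker2 : (et ^ q) z = 0 := by
    rw [hzdef, map_sum]
    have hterm2 : ∀ a ∈ S2, (et ^ q) (SymSq.mul (w a) (w (n-1-a)))
        = (if q ≤ a then SymSq.mul (w (a-q)) (w (n-1-a)) else 0)
          + (if a + q ≤ n - 1 then SymSq.mul (w a) (w (n-1-a-q)) else 0) := by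
      intro a ha
      obtain ⟨han, hdvda⟩ := hmemS2 a ha
      rw [hL2 (w a) (w (n-1-a))]
      congr 1
      · by_cases hqa : q ≤ a
        · rw [if_pos hqa, hw_le q a hqa han]
        · rw [if_neg hqa, hw_gt q a (by omega) han, SymSq.zero_mul]
      · by_cases hqa : a + q ≤ n - 1
        · rw [if_pos hqa, hw_le q (n-1-a) (by omega) (by omega)]
        · rw [if_neg hqa, hw_gt q (n-1-a) (by omega) (by omega), SymSq.mul_zero]
    rw [Finset.sum_congr rfl hterm2, Finset.sum_add_distrib,
      ← Finset.sum_filter, ← Finset.sum_filter]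
    have hbij : ∑ a ∈ S2.filter (fun a => q ≤ a), SymSq.mul (K:=K) (w (a-q)) (w (n-1-a))
        = ∑ a ∈ S2.filter (fun a => a + q ≤ n-1), SymSq.mul (K:=K) (w a) (w (n-1-a-q)) := by
      apply Finset.sum_bij' (fun a _ => a - q) (fun a _ => a + q)
      · intro a ha
        simp only [hS2, Finset.mem_filter, Finset.mem_range] at ha ⊢
        obtain ⟨⟨han, hmod⟩, hqa⟩ := ha
        have hd : q ∣ a := Nat.dvd_of_mod_eq_zero hmod
        have hd2 : q ∣ (a - q) := Nat.dvd_sub hd dvd_rfl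
        exact ⟨⟨by omega, Nat.mod_eq_zero_of_dvd hd2⟩, by omega⟩
      · intro a ha
        simp only [hS2, Finset.mem_filter, Finset.mem_range] at ha ⊢
        obtain ⟨⟨han, hmod⟩, hqa⟩ := ha
        refine ⟨⟨by omega, ?_⟩, by omega⟩
        rw [Nat.add_mod_right]
        exact hmod
      · intro a ha
        simp only [hS2, Finset.mem_filter, Finset.mem_range] at ha
        omega
      · intro a ha
        simp only [hS2, Finset.mem_filter, Finset.mem_range] at ha
        omega
      · intro a ha
        simp only [hS2, Finset.mem_filter, Finset.mem_range] at ha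
        have h3 : n-1-(a-q)-q = n-1-a := by omega
        rw [h3]
    rw [hbij]
    exact char2_add_self K _
  have hcard : S2.card = u := by
    have himg : S2 = (Finset.range u).image (fun k => k * q) := by
      ext a
      simp only [hS2, Finset.mem_filter, Finset.mem_range, Finset.mem_image]
      constructor
      · rintro ⟨han, hmod⟩
        obtain ⟨m, rfl⟩ := Nat.dvd_of_mod_eq_zero hmod
        refine ⟨m, ?_, by ring⟩
        rw [hu] at han
        exact lt_of_mul_lt_mul_left han (Nat.zero_le q)
      · rintro ⟨k, hk, rfl⟩
        refine ⟨?_, Nat.mul_mod_left k q⟩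
        rw [hu, mul_comm q u]
        exact mul_lt_mul_of_pos_right hk hq0
    rw [himg, Finset.card_image_of_injective _
      (fun x y hxy => Nat.eq_of_mul_eq_mul_right hq0 hxy), Finset.card_range]
  have hφz : φ z ≠ 0 := by
    rw [hzdef, map_sum]
    have hterm3 : ∀ a ∈ S2, φ (SymSq.mul (w a) (w (n-1-a))) = c (n-1) := by
      intro a ha
      obtain ⟨han, _⟩ := hmemS2 a ha
      rw [hφ, hbc a (n-1-a) han (by omega)]
      congr 1
      omega
    rw [Finset.sum_congr rfl hterm3, Finset.sum_const, hcard, nsmul_eq_mul]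
    intro hzero
    rcases mul_eq_zero.mp hzero with h | h
    · have hone : ((u:ℕ):K) = 1 := by
        obtain ⟨m, hm⟩ := Nat.odd_iff.mpr huodd
        rw [hm]
        push_cast
        rw [show (2:K) = 0 by exact_mod_cast CharP.cast_eq_zero K 2]
        ring
      rw [hone] at h
      exact one_ne_zero h
    · exact hcn1 h
  refine ⟨claim1, ?_⟩
  intro hle
  exact hφz (LinearMap.mem_ker.mp (hle (LinearMap.mem_ker.mpr hker2)))
end

section
/- Let (V, b) be a symplectic vector space of dimension 2ℓ (ℓ ≥ 1) over an algebraically closed field K of characteristic 2, and let u ∈ Sp(V) be unipotent with a single Jordan block of size 2ℓ on V (so u is a regular unipotent element of Sp(V)). Then the centralizer of u in the Lie algebra sp(V) has dimension ℓ + 1: dim {X ∈ sp(V) : uX = Xu} = ℓ + 1. -/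
open Finset Polynomial

private lemma master_indep {K V : Type*} [Field K] [AddCommGroup V] [Module K V]
    {n r : ℕ} {N : Module.End K V} {e : V} (hNe : (N ^ (n-1)) e ≠ 0)
    {X : Fin r → Module.End K V} {p : Fin r → ℕ}
    (hX : ∀ m, N ^ (p m) * X m = N ^ (n-1))
    (hkill : ∀ m m' : Fin r, m < m' → N ^ (p m) * X m' = 0)
    {c : Fin r → K} (hc : ∑ m, c m • (X m) e = 0) : ∀ m, c m = 0 := by
  have key : ∀ k : ℕ, ∀ m : Fin r, (m : ℕ) = k → c m = 0 := by
    intro k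
    induction k using Nat.strong_induction_on with
    | _ k IH =>
      intro m hmk
      have h1 : (N ^ p m) (∑ j, c j • (X j) e) = 0 := by rw [hc, map_zero]
      rw [map_sum] at h1
      have h2 : ∀ j ∈ Finset.univ, j ≠ m → (N ^ p m) (c j • (X j) e) = 0 := by
        intro j _ hj
        rcases lt_or_gt_of_ne hj with h | h
        · have hcj : c j = 0 := IH (j : ℕ) (by omega) j rfl
          simp [hcj]
        · have h0 := hkill m j h
          rw [map_smul]
          have hXje : (N ^ p m) ((X j) e) = ((N ^ p m) * X j) e := rfl
          rw [hXje, h0]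
          simp
      have h3 := Finset.sum_eq_single_of_mem m (Finset.mem_univ m) h2
      rw [h3, map_smul] at h1
      have hXme : (N ^ p m) ((X m) e) = ((N ^ p m) * X m) e := rfl
      rw [hXme, hX m] at h1
      rcases smul_eq_zero.mp h1 with h | h
      · exact h
      · exact absurd h hNe
  intro m; exact key (m : ℕ) m rfl

private lemma pow_even_decomp {R : Type*} [CommRing R] (h2 : (2:R) = 0) (x p : R) (s : ℕ) :
    ∃ h : R, (1 + x + x^2*p)^(2*s) = 1 + x^2 * h := by
  induction s with
  | zero => exact ⟨0, by ring⟩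
  | succ s ih =>
    obtain ⟨h, hh⟩ := ih
    refine ⟨h + (1 + x^2*p^2) + x^2*(h*(1+x^2*p^2)), ?_⟩
    have he : 2*(s+1) = 2*s + 2 := by ring
    rw [he, pow_add, hh]
    linear_combination ((1+x^2*h)*(x+x^2*p+x^3*p)) * h2

private lemma pow_odd_decomp {R : Type*} [CommRing R] (h2 : (2:R) = 0) (x p : R) (t : ℕ) :
    ∃ g : R, (1 + x + x^2*p)^(2*t+1) = 1 + x + x^2 * g := by
  obtain ⟨h, hh⟩ := pow_even_decomp h2 x p t
  refine ⟨p + h + x*h + x^2*h*p, ?_⟩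
  rw [pow_add, hh]
  ring

private lemma one_add_mul_pow {R : Type*} [CommRing R] (x a : R) (k : ℕ) :
    ∃ s : R, (1 + x*a)^k = 1 + x*s := by
  induction k with
  | zero => exact ⟨0, by ring⟩
  | succ k ih =>
    obtain ⟨s, hs⟩ := ih
    exact ⟨s + a + x*(s*a), by rw [pow_succ, hs]; ring⟩

/-- The symplectic Lie algebra `sp(V)` of a bilinear form `b`:
all `X` with `b(Xv, w) + b(v, Xw) = 0`, as a submodule of `End(V)`. -/
def spSub (K V : Type*) [Field K] [AddCommGroup V] [Module K V]
    (b : V →ₗ[K] V →ₗ[K] K) : Submodule K (Module.End K V) where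
  carrier := {X | ∀ v w : V, b (X v) w + b v (X w) = 0}
  add_mem' := by
    intro X Y hX hY v w
    have h1 := hX v w
    have h2 := hY v w
    simp only [LinearMap.add_apply, map_add] at *
    linear_combination h1 + h2
  zero_mem' := by
    intro v w
    simp
  smul_mem' := by
    intro c X hX v w
    have h := hX v w
    simp only [LinearMap.smul_apply, map_smul, smul_eq_mul] at *
    linear_combination c * h

/-- For a regular unipotent element `u ∈ Sp(V)` (a single Jordan block of size `2ℓ` on `V`),
the centralizer of `u` in the Lie algebra `sp(V)` has dimension `ℓ + 1`. -/
theorem stmt17 (K : Type*) [Field K] [IsAlgClosed K] [CharP K 2]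
    (V : Type*) [AddCommGroup V] [Module K V] [FiniteDimensional K V]
    (ℓ : ℕ) (hl : 1 ≤ ℓ) (hdim : Module.finrank K V = 2 * ℓ)
    (b : V →ₗ[K] V →ₗ[K] K)
    (halt : ∀ v : V, b v v = 0)
    (hnd : ∀ v : V, (∀ w : V, b v w = 0) → v = 0)
    (u : Module.End K V)
    (hSp : ∀ v w : V, b (u v) (u w) = b v w)
    (hu1 : (u - 1) ^ (2 * ℓ - 1) ≠ 0) (hu2 : (u - 1) ^ (2 * ℓ) = 0) :
    Module.finrank K
      ↥(spSub K V b ⊓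
        LinearMap.ker (LinearMap.mulLeft K u - LinearMap.mulRight K u)) = ℓ + 1 := by
  classical
  set n := 2 * ℓ with hn
  have hn2 : 2 ≤ n := by omega
  set N : Module.End K V := u - 1 with hN
  have hNn : N ^ n = 0 := hu2
  have hNn1 : N ^ (n - 1) ≠ 0 := hu1
  have hNhigh : ∀ m : ℕ, n ≤ m → N ^ m = 0 := fun m hm => pow_eq_zero_of_le hm hNn
  -- characteristic two facts
  have h2K : (2 : K) = 0 := by exact_mod_cast CharP.cast_eq_zero K 2
  have hKadd : ∀ x : K, x + x = 0 := fun x => by rw [← two_mul, h2K, zero_mul]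
  have h2P : (2 : Polynomial K) = 0 := by
    rw [← map_ofNat (Polynomial.C : K →+* Polynomial K) 2, show ((2 : K) = 0) from h2K, map_zero]
  -- symmetry of b
  have hsym : ∀ v w : V, b v w = b w v := by
    intro v w
    have h := halt (v + w)
    simp only [map_add, LinearMap.add_apply, halt] at h
    have h' : b v w + b w v = 0 := by linear_combination h
    linear_combination h' - hKadd (b w v)
  -- u = 1 + N
  have huN : u = 1 + N := by rw [hN]; abel
  -- the polynomial machinery
  set φ : Polynomial K →ₐ[K] Module.End K V := Polynomial.aeval N with hφ
  have hφX : φ (X : Polynomial K) = N := Polynomial.aeval_X N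
  have hφu : φ (1 + X) = u := by rw [map_add, map_one, hφX, huN]
  set mp : Polynomial K := ∑ j ∈ Finset.range n, (X : Polynomial K) ^ j with hmpdef
  set qp : Polynomial K := ∑ j ∈ Finset.range (n - 2), (X : Polynomial K) ^ j with hqpdef
  set M : Module.End K V := φ mp with hM
  -- decomposition of mp
  have hmp : mp = 1 + X + X ^ 2 * qp := by
    have e1 : mp = ∑ j ∈ Finset.range (n - 1), (X : Polynomial K) ^ (j + 1) + 1 := by
      rw [hmpdef, show n = (n - 1) + 1 by omega, Finset.sum_range_succ']
      simp
    have e2 : ∑ j ∈ Finset.range (n - 1), (X : Polynomial K) ^ (j + 1)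
        = ∑ j ∈ Finset.range (n - 2), (X : Polynomial K) ^ (j + 1 + 1) + X := by
      rw [show n - 1 = (n - 2) + 1 by omega, Finset.sum_range_succ']
      simp
    have e3 : ∑ j ∈ Finset.range (n - 2), (X : Polynomial K) ^ (j + 1 + 1)
        = X ^ 2 * qp := by
      rw [hqpdef, Finset.mul_sum]
      exact Finset.sum_congr rfl fun j _ => by ring
    rw [e1, e2, e3]; ring
  -- mp * (1 + X) = 1 + X^n
  have hmpu : mp * (1 + X) = 1 + X ^ n := by
    have hg := geom_sum_mul (X : Polynomial K) n
    rw [hmpdef]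
    linear_combination hg + ((∑ j ∈ Finset.range n, (X : Polynomial K) ^ j) - 1) * h2P
  -- M * u = 1 and u * M = 1
  have hMu : M * u = 1 := by
    rw [hM, ← hφu, ← map_mul, hmpu, map_add, map_one, map_pow, hφX, hNn, add_zero]
  have huM : u * M = 1 := by
    rw [hM, ← hφu, ← map_mul, mul_comm, hmpu, map_add, map_one, map_pow, hφX, hNn, add_zero]
  -- b-compatibilities
  have hbuM : ∀ v w : V, b (u v) w = b v (M w) := by
    intro v w
    have h0 : u (M w) = w := by
      rw [← Module.End.mul_apply, huM, Module.End.one_apply]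
    calc b (u v) w = b (u v) (u (M w)) := by rw [h0]
      _ = b v (M w) := hSp v (M w)
  have hMN : M * N = M - 1 := by
    have hp1 : mp * X = mp - 1 + X ^ n := by
      linear_combination hmpu + (1 - mp) * h2P
    rw [hM, ← hφX, ← map_mul, hp1, map_add, map_sub, map_one, map_pow, hφX, hNn, add_zero]
  have hbN1 : ∀ v w : V, b (N v) w = b v ((M * N) w) := by
    intro v w
    have h0 : N v = u v - v := by
      rw [hN]; simp [LinearMap.sub_apply]
    rw [h0, hMN]
    have h1 : b (u v - v) w = b (u v) w - b v w := by
      rw [map_sub, LinearMap.sub_apply]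
    rw [h1, hbuM]
    have h2 : (M - 1) w = M w - w := by simp [LinearMap.sub_apply]
    rw [h2, map_sub]
  have hbNk : ∀ (k : ℕ) (v w : V), b ((N ^ k) v) w = b v ((M ^ k * N ^ k) w) := by
    intro k
    induction k with
    | zero => intro v w; simp
    | succ k ih =>
      intro v w
      have h0 : (N ^ (k + 1)) v = (N ^ k) (N v) := by
        rw [pow_succ, Module.End.mul_apply]
      rw [h0, ih, hbN1]
      have h2 : (M * N) * (M ^ k * N ^ k) = M ^ (k + 1) * N ^ (k + 1) := by
        rw [hM, ← hφX, ← map_pow, ← map_pow, ← map_mul, ← map_mul, ← map_mul,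
          ← map_pow, ← map_pow, ← map_mul]
        congr 1
        ring
      have h1 : (M * N) ((M ^ k * N ^ k) w) = (M ^ (k+1) * N ^ (k+1)) w := by rw [← h2]; rfl
      rw [h1]
  have hSppow : ∀ (k : ℕ) (v w : V), b ((u ^ k) v) ((u ^ k) w) = b v w := by
    intro k
    induction k with
    | zero => intro v w; simp
    | succ k ih =>
      intro v w
      have h0 : ∀ x : V, (u ^ (k + 1)) x = (u ^ k) (u x) := by
        intro x; rw [pow_succ, Module.End.mul_apply]
      rw [h0 v, h0 w, ih, hSp]
  -- inverse relations for powers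
  have hcMu : Commute M u := by rw [Commute, SemiconjBy, hMu, huM]
  have hMuk : ∀ k : ℕ, M ^ k * u ^ k = 1 := by
    intro k
    rw [← Commute.mul_pow hcMu, hMu, one_pow]
  have huMk : ∀ k : ℕ, u ^ k * M ^ k = 1 := by
    intro k
    rw [← Commute.mul_pow hcMu.symm, huM, one_pow]
  have hbMinv : ∀ (k : ℕ) (v w : V), b ((M ^ k) v) ((M ^ k) w) = b v w := by
    intro k v w
    have h0 : ∀ x : V, (u ^ k) ((M ^ k) x) = x := by
      intro x
      rw [← Module.End.mul_apply, huMk k, Module.End.one_apply]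
    have h := hSppow k ((M ^ k) v) ((M ^ k) w)
    rw [h0, h0] at h
    exact h.symm
  have hbMleft : ∀ (k : ℕ) (v w : V), b ((M ^ k) v) w = b v ((u ^ k) w) := by
    intro k v w
    have h1 : (M ^ k) ((u ^ k) w) = w := by
      rw [← Module.End.mul_apply, hMuk k, Module.End.one_apply]
    calc b ((M ^ k) v) w = b ((M ^ k) v) ((M ^ k) ((u ^ k) w)) := by rw [h1]
      _ = b v ((u ^ k) w) := hbMinv k v _
  have hstar : ∀ (j k : ℕ) (v w : V),
      b ((M ^ k * N ^ j) v) w = b v (((M ^ j * N ^ j) * u ^ k) w) := by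
    intro j k v w
    have e0 : (M ^ k * N ^ j) v = (M ^ k) ((N ^ j) v) := rfl
    have e1 : ((M ^ j * N ^ j) * u ^ k) w = (M ^ j * N ^ j) ((u ^ k) w) := rfl
    rw [e0, e1, hbMleft, hbNk]
  -- key contraction identities
  have hkey : ∀ m : ℕ, (M ^ (2*m) * N ^ (2*m)) * u ^ m = M ^ m * N ^ (2*m) := by
    intro m
    have e1 : mp ^ m * (1 + X) ^ m = (1 + X ^ n) ^ m := by
      rw [← mul_pow, hmpu]
    obtain ⟨s0, hs0⟩ := one_add_mul_pow ((X : Polynomial K) ^ n) 1 m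
    have hpoly : (mp ^ (2*m) * X ^ (2*m)) * (1 + X) ^ m
        = mp ^ m * X ^ (2*m) + X ^ n * (s0 * (mp ^ m * X ^ (2*m))) := by
      linear_combination (mp ^ m * X ^ (2*m)) * e1 + (mp ^ m * X ^ (2*m)) * hs0
    have e2 : (M ^ (2*m) * N ^ (2*m)) * u ^ m
        = φ (mp ^ m * X ^ (2*m) + X ^ n * (s0 * (mp ^ m * X ^ (2*m)))) := by
      rw [hM, ← hφX, ← hφu]
      simp only [← map_pow, ← map_mul]
      rw [hpoly]
    rw [e2]
    simp only [map_add, map_mul, map_pow, hφX]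
    rw [hNn]
    simp only [zero_mul, mul_zero, add_zero, ← hM]
  have hMfixk : ∀ k : ℕ, M ^ k * N ^ (n-1) = N ^ (n-1) := by
    intro k
    obtain ⟨s0, hs0⟩ := one_add_mul_pow (X : Polynomial K) (1 + X * qp) k
    have hmp' : mp = 1 + X * (1 + X * qp) := by rw [hmp]; ring
    have hpoly : mp ^ k * X ^ (n-1) = X ^ (n-1) + X ^ n * s0 := by
      rw [hmp', hs0]
      have hee : n - 1 + 1 = n := by omega
      calc (1 + X * s0) * X ^ (n-1) = X ^ (n-1) + X ^ (n-1+1) * s0 := by ring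
        _ = X ^ (n-1) + X ^ n * s0 := by rw [hee]
    have e2 : M ^ k * N ^ (n-1) = φ (X ^ (n-1) + X ^ n * s0) := by
      rw [hM, ← hφX]
      simp only [← map_pow, ← map_mul]
      rw [hpoly]
    rw [e2]
    simp only [map_add, map_mul, map_pow, hφX]
    rw [hNn]
    simp only [zero_mul, mul_zero, add_zero]
  -- membership in sp
  have spF : ∀ m : ℕ, (M ^ m * N ^ (2*m)) ∈ spSub K V b := by
    intro m v w
    have h1 := hstar (2*m) m v w
    rw [hkey m] at h1
    rw [h1]
    exact hKadd _
  have spLast : N ^ (n-1) ∈ spSub K V b := by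
    intro v w
    have h1 := hbNk (n-1) v w
    rw [hMfixk (n-1)] at h1
    rw [h1]
    exact hKadd _
  -- membership in the centralizer
  have hker : ∀ a : Polynomial K,
      φ a ∈ LinearMap.ker (LinearMap.mulLeft K u - LinearMap.mulRight K u) := by
    intro a
    rw [LinearMap.mem_ker, LinearMap.sub_apply, LinearMap.mulLeft_apply,
      LinearMap.mulRight_apply, sub_eq_zero, ← hφu, ← map_mul, ← map_mul, mul_comm]
  have hrepF : ∀ m : ℕ, M ^ m * N ^ (2*m) = φ (mp ^ m * X ^ (2*m)) := by
    intro m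
    rw [map_mul, map_pow, map_pow, hφX, ← hM]
  have hrepN : ∀ k : ℕ, N ^ k = φ (X ^ k) := by
    intro k
    rw [map_pow, hφX]
  -- nondegeneracy in operator form
  have hopeq : ∀ Y Z : Module.End K V, (∀ v w : V, b v (Y w) = b v (Z w)) → Y = Z := by
    intro Y Z h
    ext w
    have h0 : ∀ v : V, b (Y w - Z w) v = 0 := by
      intro v
      rw [hsym]
      rw [map_sub, h v w, sub_self]
    have := hnd (Y w - Z w) h0
    exact sub_eq_zero.mp this
  -- commutation of N and M
  have hcNM : Commute N M := by
    rw [Commute, SemiconjBy, ← hφX, hM, ← map_mul, ← map_mul, mul_comm]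
  -- cyclic vector
  obtain ⟨e, hNe⟩ : ∃ e : V, (N ^ (n-1)) e ≠ 0 := by
    by_contra h
    push_neg at h
    exact hNn1 (LinearMap.ext fun x => by simpa using h x)
  -- linear independence of iterates of the cyclic vector
  have li_v : LinearIndependent K (fun i : Fin n => (N ^ (i : ℕ)) e) := by
    rw [Fintype.linearIndependent_iff]
    intro c hc
    exact master_indep hNe (X := fun i : Fin n => N ^ (i : ℕ))
      (p := fun i : Fin n => n - 1 - (i : ℕ))
      (fun i => by
        show N ^ (n - 1 - (i : ℕ)) * N ^ (i : ℕ) = N ^ (n - 1)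
        have := i.isLt
        rw [← pow_add]
        congr 1
        omega)
      (fun i j hij => by
        show N ^ (n - 1 - (i : ℕ)) * N ^ (j : ℕ) = 0
        have h1 : (i : ℕ) < (j : ℕ) := Fin.lt_def.mp hij
        have h2 := j.isLt
        have h3 := i.isLt
        rw [← pow_add]
        exact hNhigh _ (by omega)) hc
  -- the basis given by iterates
  have hcard : Fintype.card (Fin n) = Module.finrank K V := by simp [hdim]
  haveI : Nonempty (Fin n) := ⟨⟨0, by omega⟩⟩
  let B : Module.Basis (Fin n) K V := basisOfLinearIndependentOfCardEqFinrank li_v hcard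
  have hB : ⇑B = fun i : Fin n => (N ^ (i : ℕ)) e :=
    coe_basisOfLinearIndependentOfCardEqFinrank li_v hcard
  -- independence of the operator monomials
  have li_op : LinearIndependent K (fun i : Fin n => (N : Module.End K V) ^ (i : ℕ)) := by
    rw [Fintype.linearIndependent_iff]
    intro c hc0
    have hc : ∑ i : Fin n, c i • (N ^ (i : ℕ)) e = 0 := by
      have h := congrArg (fun T : Module.End K V => T e) hc0
      simpa only [LinearMap.sum_apply, LinearMap.smul_apply, LinearMap.zero_apply] using h
    exact master_indep hNe (X := fun i : Fin n => N ^ (i : ℕ))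
      (p := fun i : Fin n => n - 1 - (i : ℕ))
      (fun i => by
        show N ^ (n - 1 - (i : ℕ)) * N ^ (i : ℕ) = N ^ (n - 1)
        have := i.isLt
        rw [← pow_add]
        congr 1
        omega)
      (fun i j hij => by
        show N ^ (n - 1 - (i : ℕ)) * N ^ (j : ℕ) = 0
        have h1 : (i : ℕ) < (j : ℕ) := Fin.lt_def.mp hij
        have h2 := j.isLt
        have h3 := i.isLt
        rw [← pow_add]
        exact hNhigh _ (by omega)) hc
  -- the centralizer is the span of the monomials
  have hCspan : LinearMap.ker (LinearMap.mulLeft K u - LinearMap.mulRight K u)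
      = Submodule.span K (Set.range fun i : Fin n => (N : Module.End K V) ^ (i : ℕ)) := by
    apply le_antisymm
    · intro Xop hX
      have hcomm : u * Xop = Xop * u := by
        rw [LinearMap.mem_ker, LinearMap.sub_apply, LinearMap.mulLeft_apply,
          LinearMap.mulRight_apply, sub_eq_zero] at hX
        exact hX
      have hcN : Commute Xop N := by
        rw [Commute, SemiconjBy, hN, mul_sub, sub_mul, mul_one, one_mul, hcomm]
      have hXe : Xop e ∈ Submodule.span K (Set.range fun i : Fin n => (N ^ (i : ℕ)) e) := by
        have hr : Set.range (fun i : Fin n => (N ^ (i : ℕ)) e) = Set.range ⇑B := by rw [hB]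
        rw [hr, B.span_eq]
        trivial
      obtain ⟨c, hc⟩ := (Submodule.mem_span_range_iff_exists_fun K).mp hXe
      have hXY : Xop = ∑ i : Fin n, c i • (N : Module.End K V) ^ (i : ℕ) := by
        refine B.ext fun i => ?_
        have hBi : B i = (N ^ (i : ℕ)) e := congrFun hB i
        rw [hBi]
        have l1 : Xop ((N ^ (i : ℕ)) e) = (N ^ (i : ℕ)) (Xop e) := by
          have hcp : Xop * N ^ (i : ℕ) = N ^ (i : ℕ) * Xop := (hcN.pow_right (i : ℕ)).eq
          calc Xop ((N ^ (i : ℕ)) e) = (Xop * N ^ (i : ℕ)) e := rfl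
            _ = (N ^ (i : ℕ) * Xop) e := by rw [hcp]
            _ = (N ^ (i : ℕ)) (Xop e) := rfl
        rw [l1, ← hc, map_sum]
        simp only [map_smul, LinearMap.sum_apply, LinearMap.smul_apply]
        refine Finset.sum_congr rfl fun j _ => ?_
        congr 1
        calc (N ^ (i : ℕ)) ((N ^ (j : ℕ)) e) = (N ^ (i : ℕ) * N ^ (j : ℕ)) e := rfl
          _ = (N ^ (j : ℕ) * N ^ (i : ℕ)) e := by rw [pow_mul_comm]
          _ = (N ^ (j : ℕ)) ((N ^ (i : ℕ)) e) := rfl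
      rw [hXY]
      exact Submodule.sum_mem _ fun i _ =>
        Submodule.smul_mem _ _ (Submodule.subset_span ⟨i, rfl⟩)
    · rw [Submodule.span_le]
      rintro _ ⟨i, rfl⟩
      show (N : Module.End K V) ^ (i : ℕ) ∈
        LinearMap.ker (LinearMap.mulLeft K u - LinearMap.mulRight K u)
      rw [hrepN (i : ℕ)]
      exact hker _
  -- the fixed family F
  set S : Submodule K (Module.End K V) := spSub K V b ⊓
      LinearMap.ker (LinearMap.mulLeft K u - LinearMap.mulRight K u) with hSdef
  set Fam : Fin (ℓ+1) → Module.End K V :=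
    fun m => if (m : ℕ) = ℓ then N ^ (n-1) else M ^ (m : ℕ) * N ^ (2*(m : ℕ)) with hFam
  have hFamS : ∀ m : Fin (ℓ+1), Fam m ∈ S := by
    intro m
    by_cases hm : (m : ℕ) = ℓ
    · have : Fam m = N ^ (n-1) := by rw [hFam]; simp [hm]
      rw [this]
      exact Submodule.mem_inf.mpr ⟨spLast, by rw [hrepN]; exact hker _⟩
    · have : Fam m = M ^ (m : ℕ) * N ^ (2*(m : ℕ)) := by rw [hFam]; simp [hm]
      rw [this]
      exact Submodule.mem_inf.mpr ⟨spF (m : ℕ), by rw [hrepF]; exact hker _⟩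
  have liF : LinearIndependent K Fam := by
    rw [Fintype.linearIndependent_iff]
    intro c hc0
    have hc : ∑ m : Fin (ℓ+1), c m • (Fam m) e = 0 := by
      have h := congrArg (fun T : Module.End K V => T e) hc0
      simpa only [LinearMap.sum_apply, LinearMap.smul_apply, LinearMap.zero_apply] using h
    refine master_indep hNe (X := Fam) (p := fun m : Fin (ℓ+1) => n - 1 - 2*(m : ℕ))
      ?_ ?_ hc
    · intro m
      show N ^ (n - 1 - 2*(m : ℕ)) * Fam m = N ^ (n-1)
      by_cases hm : (m : ℕ) = ℓ
      · have hF : Fam m = N ^ (n-1) := by rw [hFam]; simp [hm]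
        have hz : n - 1 - 2*(m : ℕ) = 0 := by omega
        rw [hF, hz, pow_zero, one_mul]
      · have hmlt : (m : ℕ) < ℓ := by have := m.isLt; omega
        have hF : Fam m = M ^ (m : ℕ) * N ^ (2*(m : ℕ)) := by rw [hFam]; simp [hm]
        rw [hF, ← mul_assoc, (hcNM.pow_pow (n - 1 - 2*(m : ℕ)) (m : ℕ)).eq,
          mul_assoc, ← pow_add, show n - 1 - 2*(m : ℕ) + 2*(m : ℕ) = n - 1 by omega,
          hMfixk (m : ℕ)]
    · intro m m' hmm'
      show N ^ (n - 1 - 2*(m : ℕ)) * Fam m' = 0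
      have h1 : (m : ℕ) < (m' : ℕ) := Fin.lt_def.mp hmm'
      have h2 := m'.isLt
      by_cases hm : (m' : ℕ) = ℓ
      · have hF : Fam m' = N ^ (n-1) := by rw [hFam]; simp [hm]
        rw [hF, ← pow_add]
        exact hNhigh _ (by omega)
      · have hF : Fam m' = M ^ (m' : ℕ) * N ^ (2*(m' : ℕ)) := by rw [hFam]; simp [hm]
        rw [hF, ← mul_assoc, (hcNM.pow_pow (n - 1 - 2*(m : ℕ)) (m' : ℕ)).eq,
          mul_assoc, ← pow_add, hNhigh (n - 1 - 2*(m : ℕ) + 2*(m' : ℕ)) (by omega), mul_zero]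
  have hlow : ℓ + 1 ≤ Module.finrank K S := by
    have hle : Submodule.span K (Set.range Fam) ≤ S :=
      Submodule.span_le.mpr (by rintro _ ⟨m, rfl⟩; exact hFamS m)
    have hfr := finrank_span_eq_card liF
    calc ℓ + 1 = Module.finrank K (Submodule.span K (Set.range Fam)) := by
          rw [hfr]; simp
      _ ≤ Module.finrank K S := Submodule.finrank_mono hle
  -- the odd monomial family T
  set Tfam : Fin (ℓ-1) → Module.End K V := fun t => N ^ (2*(t : ℕ)+1) with hTfam
  set Tsub : Submodule K (Module.End K V) := Submodule.span K (Set.range Tfam) with hTsub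
  have liT : LinearIndependent K Tfam := by
    rw [Fintype.linearIndependent_iff]
    intro c hc0
    have hc : ∑ t : Fin (ℓ-1), c t • (Tfam t) e = 0 := by
      have h := congrArg (fun T : Module.End K V => T e) hc0
      simpa only [LinearMap.sum_apply, LinearMap.smul_apply, LinearMap.zero_apply] using h
    refine master_indep hNe (X := Tfam) (p := fun t : Fin (ℓ-1) => n - 2 - 2*(t : ℕ))
      ?_ ?_ hc
    · intro t
      show N ^ (n - 2 - 2*(t : ℕ)) * Tfam t = N ^ (n-1)
      have := t.isLt
      rw [hTfam, ← pow_add]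
      congr 1
      omega
    · intro t t' htt'
      show N ^ (n - 2 - 2*(t : ℕ)) * Tfam t' = 0
      have h1 : (t : ℕ) < (t' : ℕ) := Fin.lt_def.mp htt'
      have h2 := t'.isLt
      rw [hTfam, ← pow_add]
      exact hNhigh _ (by omega)
  have hTle : Tsub ≤ LinearMap.ker (LinearMap.mulLeft K u - LinearMap.mulRight K u) := by
    rw [hTsub, Submodule.span_le]
    rintro _ ⟨t, rfl⟩
    show (N : Module.End K V) ^ (2*(t : ℕ)+1) ∈
      LinearMap.ker (LinearMap.mulLeft K u - LinearMap.mulRight K u)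
    rw [hrepN]
    exact hker _
  -- the odd part of M-powers
  have hModd : ∀ t : ℕ, ∃ G : Module.End K V,
      M ^ (2*t+1) * N ^ (2*t+1) - N ^ (2*t+1) = N ^ (2*t+2) + N ^ (2*t+3) * G := by
    intro t
    obtain ⟨g, hg⟩ := pow_odd_decomp h2P (X : Polynomial K) qp t
    refine ⟨φ g, ?_⟩
    have hpoly : mp ^ (2*t+1) * X ^ (2*t+1) - X ^ (2*t+1)
        = X ^ (2*t+2) + X ^ (2*t+3) * g := by
      rw [hmp, hg]; ring
    have e2 : M ^ (2*t+1) * N ^ (2*t+1) - N ^ (2*t+1)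
        = φ (mp ^ (2*t+1) * X ^ (2*t+1) - X ^ (2*t+1)) := by
      rw [hM, ← hφX]
      simp only [← map_pow, ← map_mul, ← map_sub]
    rw [e2, hpoly, map_add, map_mul, map_pow, map_pow, hφX]
  -- S ⊓ Tsub = ⊥
  have hST : S ⊓ Tsub = ⊥ := by
    rw [eq_bot_iff]
    intro Xop hXop
    have hX1 : Xop ∈ spSub K V b := hXop.1.1
    have hXT : Xop ∈ Tsub := hXop.2
    obtain ⟨c, hc⟩ := (Submodule.mem_span_range_iff_exists_fun K).mp hXT
    have hXsp : ∀ v w : V, b (Xop v) w = b v (Xop w) := by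
      intro v w
      have h := hX1 v w
      linear_combination h - hKadd (b v (Xop w))
    have hYX : (∑ t : Fin (ℓ-1), c t • (M ^ (2*(t : ℕ)+1) * N ^ (2*(t : ℕ)+1))) = Xop := by
      apply hopeq
      intro v w
      have e1 : b v ((∑ t : Fin (ℓ-1), c t • (M ^ (2*(t : ℕ)+1) * N ^ (2*(t : ℕ)+1))) w)
          = ∑ t : Fin (ℓ-1), c t * b v ((M ^ (2*(t : ℕ)+1) * N ^ (2*(t : ℕ)+1)) w) := by
        simp only [LinearMap.sum_apply, LinearMap.smul_apply, map_sum, map_smul, smul_eq_mul]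
      have e2 : b (Xop v) w = ∑ t : Fin (ℓ-1), c t * b ((N ^ (2*(t : ℕ)+1)) v) w := by
        rw [← hc]
        simp only [hTfam, LinearMap.sum_apply, LinearMap.smul_apply, map_sum, map_smul,
          smul_eq_mul]
      rw [e1, ← hXsp v w, e2]
      refine Finset.sum_congr rfl fun t _ => ?_
      rw [hbNk (2*(t : ℕ)+1) v w]
    have hD : ∑ t : Fin (ℓ-1),
        c t • (M ^ (2*(t : ℕ)+1) * N ^ (2*(t : ℕ)+1) - N ^ (2*(t : ℕ)+1)) = 0 := by
      have hz : (∑ t : Fin (ℓ-1), c t • (M ^ (2*(t : ℕ)+1) * N ^ (2*(t : ℕ)+1))) - Xop = 0 := by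
        rw [hYX, sub_self]
      calc ∑ t : Fin (ℓ-1), c t • (M ^ (2*(t : ℕ)+1) * N ^ (2*(t : ℕ)+1) - N ^ (2*(t : ℕ)+1))
          = (∑ t : Fin (ℓ-1), c t • (M ^ (2*(t : ℕ)+1) * N ^ (2*(t : ℕ)+1)))
            - ∑ t : Fin (ℓ-1), c t • N ^ (2*(t : ℕ)+1) := by
            rw [← Finset.sum_sub_distrib]
            exact Finset.sum_congr rfl fun t _ => smul_sub _ _ _
        _ = 0 := by
            have hcX : ∑ t : Fin (ℓ-1), c t • (N : Module.End K V) ^ (2*(t : ℕ)+1) = Xop := hc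
            rw [hcX, hz]
    have hDe : ∑ t : Fin (ℓ-1),
        c t • ((M ^ (2*(t : ℕ)+1) * N ^ (2*(t : ℕ)+1) - N ^ (2*(t : ℕ)+1))) e = 0 := by
      have h := congrArg (fun T : Module.End K V => T e) hD
      simpa only [LinearMap.sum_apply, LinearMap.smul_apply, LinearMap.zero_apply] using h
    have hczero : ∀ t : Fin (ℓ-1), c t = 0 := by
      refine master_indep hNe
        (X := fun t : Fin (ℓ-1) => M ^ (2*(t : ℕ)+1) * N ^ (2*(t : ℕ)+1) - N ^ (2*(t : ℕ)+1))
        (p := fun t : Fin (ℓ-1) => n - 3 - 2*(t : ℕ)) ?_ ?_ hDe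
      · intro t
        show N ^ (n - 3 - 2*(t : ℕ)) *
          (M ^ (2*(t : ℕ)+1) * N ^ (2*(t : ℕ)+1) - N ^ (2*(t : ℕ)+1)) = N ^ (n-1)
        obtain ⟨G, hG⟩ := hModd (t : ℕ)
        have := t.isLt
        rw [hG, mul_add, ← mul_assoc, ← pow_add, ← pow_add,
          show n - 3 - 2*(t : ℕ) + (2*(t : ℕ)+2) = n - 1 by omega,
          show n - 3 - 2*(t : ℕ) + (2*(t : ℕ)+3) = n by omega,
          hNn, zero_mul, add_zero]
      · intro t t' htt'
        show N ^ (n - 3 - 2*(t : ℕ)) *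
          (M ^ (2*(t' : ℕ)+1) * N ^ (2*(t' : ℕ)+1) - N ^ (2*(t' : ℕ)+1)) = 0
        obtain ⟨G, hG⟩ := hModd (t' : ℕ)
        have h1 : (t : ℕ) < (t' : ℕ) := Fin.lt_def.mp htt'
        have h2 := t'.isLt
        rw [hG, mul_add, ← mul_assoc, ← pow_add, ← pow_add,
          hNhigh (n - 3 - 2*(t : ℕ) + (2*(t' : ℕ)+2)) (by omega),
          hNhigh (n - 3 - 2*(t : ℕ) + (2*(t' : ℕ)+3)) (by omega), zero_mul, add_zero]
    have hX0 : Xop = 0 := by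
      rw [← hc]
      simp only [hczero, zero_smul, Finset.sum_const_zero]
    rw [hX0]
    exact Submodule.zero_mem ⊥
  -- dimension count
  have hfrT : Module.finrank K Tsub = ℓ - 1 := by
    rw [hTsub, finrank_span_eq_card liT]
    simp
  have hfrC : Module.finrank K
      (LinearMap.ker (LinearMap.mulLeft K u - LinearMap.mulRight K u)) = n := by
    rw [hCspan, finrank_span_eq_card li_op]
    simp
  have hsup : S ⊔ Tsub ≤ LinearMap.ker (LinearMap.mulLeft K u - LinearMap.mulRight K u) :=
    sup_le inf_le_right hTle
  have h1 := Submodule.finrank_sup_add_finrank_inf_eq S Tsub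
  have h2 : Module.finrank K (S ⊓ Tsub : Submodule K (Module.End K V)) = 0 := by
    rw [hST]
    exact finrank_bot K _
  have h3 : Module.finrank K (S ⊔ Tsub : Submodule K (Module.End K V)) ≤ n := by
    rw [← hfrC]
    exact Submodule.finrank_mono hsup
  omega
end

section
/- Let (V, b) be a symplectic vector space of dimension 2ℓ (ℓ ≥ 1) over an algebraically closed field K of characteristic 2, and let e ∈ sp(V) be nilpotent with a single Jordan block of size 2ℓ on V, i.e. e^{2ℓ−1} ≠ 0 and e^{2ℓ} = 0 (so e is a regular nilpotent element of sp(V)). Then the centralizer of e in the Lie algebra sp(V) has dimension 2ℓ: dim {X ∈ sp(V) : eX = Xe} = 2ℓ. -/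
/-- For a regular nilpotent element `e ∈ sp(V)` (a single Jordan block of size `2ℓ` on `V`),
the centralizer of `e` in the Lie algebra `sp(V)` has dimension `2ℓ`. -/
theorem stmt18 (K : Type*) [Field K] [IsAlgClosed K] [CharP K 2]
    (V : Type*) [AddCommGroup V] [Module K V] [FiniteDimensional K V]
    (ℓ : ℕ) (hl : 1 ≤ ℓ) (hdim : Module.finrank K V = 2 * ℓ)
    (b : V →ₗ[K] V →ₗ[K] K)
    (halt : ∀ v : V, b v v = 0)
    (hnd : ∀ v : V, (∀ w : V, b v w = 0) → v = 0)
    (e : Module.End K V)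
    (hsp : ∀ v w : V, b (e v) w + b v (e w) = 0)
    (he1 : e ^ (2 * ℓ - 1) ≠ 0) (he2 : e ^ (2 * ℓ) = 0) :
    Module.finrank K
      ↥(spSub K V b ⊓
        LinearMap.ker (LinearMap.mulLeft K e - LinearMap.mulRight K e)) = 2 * ℓ := by
  set n := 2 * ℓ with hn
  have hn1 : 1 ≤ n := by omega
  -- e^m = 0 for m ≥ n
  have hpow : ∀ m, n ≤ m → (e ^ m : Module.End K V) = 0 := by
    intro m hm
    rw [show m = n + (m - n) by omega, pow_add, he2, zero_mul]
  -- cyclic vector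
  obtain ⟨v, hv⟩ : ∃ v, (e ^ (n - 1)) v ≠ 0 := by
    by_contra h
    push_neg at h
    exact he1 (LinearMap.ext fun u => h u)
  -- linear independence of iterates
  have hli : LinearIndependent K (fun i : Fin n => (e ^ (i : ℕ)) v) := by
    rw [Fintype.linearIndependent_iff]
    intro c hc
    have key : ∀ j : ℕ, ∀ hj : j < n, c ⟨j, hj⟩ = 0 := by
      intro j
      induction j using Nat.strong_induction_on with
      | _ j ih =>
        intro hj
        have h2 := congrArg (e ^ (n - 1 - j)) hc
        simp only [map_sum, map_smul, map_zero] at h2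
        have h3 : ∀ i : Fin n, (e ^ (n - 1 - j)) ((e ^ (i : ℕ)) v)
            = (e ^ (n - 1 - j + (i : ℕ))) v := by
          intro i
          rw [pow_add]
          rfl
        rw [Finset.sum_congr rfl (fun i _ => by rw [h3 i])] at h2
        have h4 : ∑ i : Fin n, c i • (e ^ (n - 1 - j + (i : ℕ))) v
            = c ⟨j, hj⟩ • (e ^ (n - 1)) v := by
          rw [Finset.sum_eq_single (⟨j, hj⟩ : Fin n)]
          · rw [show ((⟨j, hj⟩ : Fin n) : ℕ) = j from rfl,
              show n - 1 - j + j = n - 1 from by omega]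
          · intro i _ hi
            rcases lt_or_gt_of_ne (fun h => hi (Fin.ext h) : (i : ℕ) ≠ j) with h | h
            · rw [ih i h i.isLt]
              simp
            · have h5 : n ≤ n - 1 - j + (i : ℕ) := by omega
              rw [hpow _ h5]
              simp
          · intro h
            exact absurd (Finset.mem_univ _) h
        rw [h4] at h2
        rcases smul_eq_zero.mp h2 with h | h
        · exact h
        · exact absurd h hv
    intro i
    have := key i i.isLt
    simpa using this
  -- basis
  have hcard : Fintype.card (Fin n) = Module.finrank K V := by simp [hdim]
  haveI : Nonempty (Fin n) := ⟨⟨0, by omega⟩⟩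
  let B : Module.Basis (Fin n) K V := basisOfLinearIndependentOfCardEqFinrank hli hcard
  have hB : ∀ i : Fin n, B i = (e ^ (i : ℕ)) v := by
    intro i
    simp [B, coe_basisOfLinearIndependentOfCardEqFinrank]
  -- symmetry of b under powers of e (char 2)
  have hsym : ∀ (x w : V), b (e x) w = b x (e w) := by
    intro x w
    have h := hsp x w
    have := neg_eq_of_add_eq_zero_left h
    rw [CharTwo.neg_eq] at this
    exact this.symm
  have hsymk : ∀ k : ℕ, ∀ x w : V, b ((e ^ k) x) w = b x ((e ^ k) w) := by
    intro k
    induction k with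
    | zero => intro x w; simp
    | succ k ih =>
      intro x w
      have h1 : (e ^ (k + 1)) x = (e ^ k) (e x) := by rw [pow_succ]; rfl
      have h2 : (e ^ (k + 1)) w = e ((e ^ k) w) := by rw [pow_succ']; rfl
      rw [h1, h2, ih (e x) w, hsym x ((e ^ k) w)]
  -- the submodule equals span of powers
  have hmemk : ∀ k : ℕ, (e ^ k : Module.End K V) ∈
      spSub K V b ⊓ LinearMap.ker (LinearMap.mulLeft K e - LinearMap.mulRight K e) := by
    intro k
    rw [Submodule.mem_inf]
    refine ⟨?_, ?_⟩
    · intro x w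
      show b ((e ^ k) x) w + b x ((e ^ k) w) = 0
      rw [hsymk k x w, CharTwo.add_self_eq_zero]
    · rw [LinearMap.mem_ker, LinearMap.sub_apply, LinearMap.mulLeft_apply,
        LinearMap.mulRight_apply, sub_eq_zero]
      exact (Commute.self_pow e k).eq
  have hSeq : spSub K V b ⊓ LinearMap.ker (LinearMap.mulLeft K e - LinearMap.mulRight K e)
      = Submodule.span K (Set.range fun i : Fin n => (e ^ (i : ℕ) : Module.End K V)) := by
    apply le_antisymm
    · intro X hX
      rw [Submodule.mem_inf] at hX
      obtain ⟨hXsp, hXc⟩ := hX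
      rw [LinearMap.mem_ker, LinearMap.sub_apply, LinearMap.mulLeft_apply,
        LinearMap.mulRight_apply, sub_eq_zero] at hXc
      -- hXc : e * X = X * e
      have hco : Commute e X := hXc
      have hcomm : ∀ k : ℕ, X * e ^ k = e ^ k * X := fun k => (hco.symm.pow_right k).eq
      set c := B.repr (X v) with hc
      have hrepr : X v = ∑ i : Fin n, c i • (e ^ (i : ℕ)) v := by
        conv_lhs => rw [← B.sum_repr (X v)]
        exact Finset.sum_congr rfl fun i _ => by rw [hB i]
      have hX : X = ∑ i : Fin n, c i • (e ^ (i : ℕ) : Module.End K V) := by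
        apply B.ext
        intro j
        rw [hB j]
        have h1 : X ((e ^ (j : ℕ)) v) = (e ^ (j : ℕ)) (X v) := by
          have := congrArg (fun f : Module.End K V => f v) (hcomm (j : ℕ))
          exact this
        rw [h1, hrepr, map_sum]
        simp only [map_smul, LinearMap.sum_apply, LinearMap.smul_apply]
        refine Finset.sum_congr rfl fun i _ => ?_
        congr 1
        have : (e ^ (j : ℕ)) * (e ^ (i : ℕ)) = (e ^ (i : ℕ)) * (e ^ (j : ℕ)) := by
          rw [← pow_add, ← pow_add, add_comm]
        exact congrArg (fun f : Module.End K V => f v) this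
      rw [hX]
      exact Submodule.sum_mem _ fun i _ => Submodule.smul_mem _ _
        (Submodule.subset_span ⟨i, rfl⟩)
    · rw [Submodule.span_le]
      rintro _ ⟨i, rfl⟩
      exact hmemk (i : ℕ)
  rw [hSeq]
  have hliE : LinearIndependent K (fun i : Fin n => (e ^ (i : ℕ) : Module.End K V)) := by
    rw [Fintype.linearIndependent_iff]
    intro c hc
    have h := congrArg (fun f : Module.End K V => f v) hc
    simp only [LinearMap.sum_apply, LinearMap.smul_apply, LinearMap.zero_apply] at h
    exact Fintype.linearIndependent_iff.mp hli c h
  rw [finrank_span_eq_card hliE, Fintype.card_fin]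
end
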